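/- arXiv:0802.3596 — 5 statements merged into one kernel-verified Lean document; each statement's English description precedes it below -/
import Mathlib

section
/- Let U, U' ⊆ ℝ^p × ℝ^q be open sets and let F = (F₁,F₂) : U → U' be a C^∞ diffeomorphism with F₂(x,0) = 0 whenever (x,0) ∈ U. Then the function F̃ defined by F̃(x,ξ,t) = (F₁(x,tξ), (1/t)·F₂(x,tξ), t) for t ≠ 0 and F̃(x,ξ,0) = (F₁(x,0), (∂F₂/∂ξ)(x,0)·ξ, 0) maps Ω_V^U into Ω_{V'}^{U'} and is a C^∞ map on Ω_V^U (in the sense of ContDiffOn, with one-sided derivatives in t at the boundary). -/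
open Set MeasureTheory

noncomputable section

/-- Points of `ℝ^p × ℝ^N × [0,1]` (the interval condition is imposed via the set `Omega`). -/
abbrev Pt (p N : ℕ) := (Fin p → ℝ) × (Fin N → ℝ) × ℝ

/-- `Ω_V^U = {(x,ξ,t) ∈ ℝ^p × ℝ^N × [0,1] : (x, tξ) ∈ U}`. -/
def Omega {p N : ℕ} (U : Set ((Fin p → ℝ) × (Fin N → ℝ))) : Set (Pt p N) :=
  {z | z.2.2 ∈ Icc (0 : ℝ) 1 ∧ (z.1, z.2.2 • z.2.1) ∈ U}

/-- Directional derivative within a set `s`, as an operator on functions. -/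
def mder {p N : ℕ} (s : Set (Pt p N)) (v : Pt p N) (g : Pt p N → ℂ) : Pt p N → ℂ :=
  fun z => fderivWithin ℝ g s z v

/-- Coordinate direction in the `x`-variables. -/
def ex {p N : ℕ} (i : Fin p) : Pt p N := (Pi.single i 1, 0, 0)

/-- Coordinate direction in the fiber (`ξ`) variables. -/
def efib {p N : ℕ} (j : Fin N) : Pt p N := (0, Pi.single j 1, 0)

/-- Coordinate direction in the `t`-variable. -/
def et {p N : ℕ} : Pt p N := (0, 0, 1)

/-- The mixed partial derivative `∂_x^l ∂_ξ^α ∂_t^m g` taken within the set `s`. -/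
def mixedD {p N : ℕ} (s : Set (Pt p N)) (l : Fin p → ℕ) (α : Fin N → ℕ) (m : ℕ)
    (g : Pt p N → ℂ) : Pt p N → ℂ :=
  (List.ofFn fun i : Fin p => (mder s (ex i))^[l i]).foldr (· ∘ ·) id <|
    (List.ofFn fun j : Fin N => (mder s (efib j))^[α j]).foldr (· ∘ ·) id <|
      (mder s et)^[m] g

/-- `K` is a conic compact subset of `U × [0,1]` relative to `V = {x : (x,0) ∈ U}`:
it is compact, contained in `U × [0,1]`, and its points over `t = 0` have vanishing
fiber component (i.e. `K ∩ (U × {0}) ⊆ (V × {0}) × {0}`). -/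
def ConicCompact {p N : ℕ} (U : Set ((Fin p → ℝ) × (Fin N → ℝ))) (K : Set (Pt p N)) : Prop :=
  IsCompact K ∧ (∀ z ∈ K, (z.1, z.2.1) ∈ U ∧ z.2.2 ∈ Icc (0 : ℝ) 1) ∧
    ∀ z ∈ K, z.2.2 = 0 → z.2.1 = 0

/-- `g` has conic compact support: there is a conic compact `K` relative to `V` such
that `g(x,ξ,t) = 0` whenever `t ≠ 0` and `(x, tξ, t) ∉ K`. -/
def HasConicSupport {p N : ℕ} (U : Set ((Fin p → ℝ) × (Fin N → ℝ))) (g : Pt p N → ℂ) : Prop :=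
  ∃ K, ConicCompact U K ∧
    ∀ z ∈ Omega U, z.2.2 ≠ 0 → (z.1, z.2.2 • z.2.1, z.2.2) ∉ K → g z = 0

/-- The rapid decay condition `(s1)`: all mixed partial derivatives are dominated by
arbitrary negative powers of `1 + ‖ξ‖²`, uniformly on `Ω_V^U`. -/
def RapidDecay {p N : ℕ} (U : Set ((Fin p → ℝ) × (Fin N → ℝ))) (g : Pt p N → ℂ) : Prop :=
  ∀ (k m : ℕ) (l : Fin p → ℕ) (α : Fin N → ℕ), ∃ C > 0, ∀ z ∈ Omega U,
    (1 + ‖z.2.1‖ ^ 2) ^ k * ‖mixedD (Omega U) l α m g z‖ ≤ C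

/-- `g ∈ S_{r,c}(Ω_V^U)`: smooth on `Ω_V^U`, conic compact support, rapid decay `(s1)`. -/
def MemSrc {p N : ℕ} (U : Set ((Fin p → ℝ) × (Fin N → ℝ))) (g : Pt p N → ℂ) : Prop :=
  ContDiffOn ℝ (⊤ : ℕ∞) g (Omega U) ∧ HasConicSupport U g ∧ RapidDecay U g

/-- For a diffeomorphism `F = (F₁,F₂)` with `F₂(x,0) = 0`, the induced map
`F̃(x,ξ,t) = (F₁(x,tξ), (1/t)F₂(x,tξ), t)` for `t ≠ 0` and
`F̃(x,ξ,0) = (F₁(x,0), (∂F₂/∂ξ)(x,0)·ξ, 0)`. -/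
noncomputable def Ftilde {p q : ℕ}
    (F : (Fin p → ℝ) × (Fin q → ℝ) → (Fin p → ℝ) × (Fin q → ℝ)) : Pt p q → Pt p q :=
  fun z =>
    if z.2.2 = 0 then
      ((F (z.1, 0)).1, fderiv ℝ (fun ξ : Fin q → ℝ => (F (z.1, ξ)).2) 0 z.2.1, 0)
    else
      ((F (z.1, z.2.2 • z.2.1)).1, z.2.2⁻¹ • (F (z.1, z.2.2 • z.2.1)).2, z.2.2)

open intervalIntegral in
theorem my_hasFDeriv {E FF : Type*} [NormedAddCommGroup E] [NormedSpace ℝ E] [ProperSpace E]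
    [NormedAddCommGroup FF] [NormedSpace ℝ FF] [CompleteSpace FF]
    {O : Set (ℝ × E)} (hO : IsOpen O) {W : Set E} (hW : IsOpen W)
    (hWO : Icc (0:ℝ) 1 ×ˢ W ⊆ O) (k : ℝ × E → FF) (hk : ContDiffOn ℝ (⊤:ℕ∞) k O)
    {w₀ : E} (hw₀ : w₀ ∈ W) :
    HasFDerivAt (fun w => ∫ s in (0:ℝ)..1, k (s, w))
      (∫ s in (0:ℝ)..1, (fderiv ℝ k (s, w₀)).comp (ContinuousLinearMap.inr ℝ ℝ E)) w₀ := by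
  haveI : SecondCountableTopologyEither ℝ (E →L[ℝ] FF) :=
    secondCountableTopologyEither_of_left ℝ _
  haveI : SecondCountableTopologyEither ℝ FF := secondCountableTopologyEither_of_left ℝ _
  obtain ⟨ε, hε, hball⟩ := Metric.isOpen_iff.1 hW w₀ hw₀
  set k₁ : ℝ × E → E →L[ℝ] FF := fun y => (fderiv ℝ k y).comp (ContinuousLinearMap.inr ℝ ℝ E)
    with hk₁def
  have hk₁ : ContDiffOn ℝ (⊤:ℕ∞) k₁ O :=
    (hk.fderiv_of_isOpen hO (by simp [ENat.coe_top_add_one])).clm_comp contDiffOn_const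
  have hball2 : Metric.closedBall w₀ (ε/2) ⊆ W :=
    (Metric.closedBall_subset_ball (by linarith)).trans hball
  have hKO : Icc (0:ℝ) 1 ×ˢ Metric.closedBall w₀ (ε/2) ⊆ O :=
    (Set.prod_mono subset_rfl hball2).trans hWO
  have hmt : ∀ x ∈ Metric.closedBall w₀ (ε/2), MapsTo (fun t : ℝ => (t, x)) (Icc (0:ℝ) 1) O :=
    fun x hx t ht => hKO ⟨ht, hx⟩
  have huIoc : uIoc (0:ℝ) 1 ⊆ Icc (0:ℝ) 1 := by
    rw [uIoc_of_le (by norm_num : (0:ℝ) ≤ 1)]; exact Ioc_subset_Icc_self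
  have hKcpt : IsCompact (Icc (0:ℝ) 1 ×ˢ Metric.closedBall w₀ (ε/2)) :=
    isCompact_Icc.prod (isCompact_closedBall _ _)
  obtain ⟨M, hM⟩ := hKcpt.exists_bound_of_continuousOn ((hk₁.continuousOn).mono hKO)
  have hdiff : ∀ y ∈ O, HasFDerivAt (fun x => k (y.1, x)) (k₁ y) y.2 := by
    intro y hy
    have h1 : HasFDerivAt k (fderiv ℝ k y) y :=
      ((hk.contDiffAt (hO.mem_nhds hy)).differentiableAt (by simp)).hasFDerivAt
    exact h1.comp y.2 (hasFDerivAt_prodMk_right (𝕜 := ℝ) y.1 y.2)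
  have key := hasFDerivAt_integral_of_dominated_of_fderiv_le (𝕜 := ℝ) (μ := volume)
    (F := fun x t => k (t, x)) (F' := fun x t => k₁ (t, x)) (x₀ := w₀)
    (a := 0) (b := 1) (bound := fun _ => M) (Metric.ball_mem_nhds w₀ (half_pos hε))
    ?_ ?_ ?_ ?_ ?_ ?_
  · exact key
  · filter_upwards [Metric.ball_mem_nhds w₀ (half_pos hε)] with x hx
    exact (hk.continuousOn.comp (Continuous.continuousOn (by fun_prop))
      ((hmt x (Metric.ball_subset_closedBall hx)).mono_left huIoc)).aestronglyMeasurable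
      measurableSet_uIoc
  · apply ContinuousOn.intervalIntegrable
    apply hk.continuousOn.comp (Continuous.continuousOn (by fun_prop))
    rw [uIcc_of_le (by norm_num : (0:ℝ) ≤ 1)]
    exact hmt w₀ (Metric.mem_closedBall_self (by positivity))
  · exact (hk₁.continuousOn.comp (Continuous.continuousOn (by fun_prop))
      ((hmt w₀ (Metric.mem_closedBall_self (by positivity))).mono_left huIoc)).aestronglyMeasurable
      measurableSet_uIoc
  · apply ae_of_all
    intro t ht x hx
    exact hM _ ⟨huIoc ht, Metric.ball_subset_closedBall hx⟩
  · exact intervalIntegrable_const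
  · apply ae_of_all
    intro t ht x hx
    exact hdiff (t, x) (hKO ⟨huIoc ht, Metric.ball_subset_closedBall hx⟩)


open intervalIntegral in
theorem my_param {E FF : Type} [NormedAddCommGroup E] [NormedSpace ℝ E] [ProperSpace E]
    [NormedAddCommGroup FF] [NormedSpace ℝ FF] [CompleteSpace FF]
    {O : Set (ℝ × E)} (hO : IsOpen O) {W : Set E} (hW : IsOpen W)
    (hWO : Icc (0:ℝ) 1 ×ˢ W ⊆ O) (n : ℕ) (k : ℝ × E → FF) (hk : ContDiffOn ℝ (⊤:ℕ∞) k O) :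
    ContDiffOn ℝ n (fun w => ∫ s in (0:ℝ)..1, k (s, w)) W := by
  match n with
  | 0 =>
    rw [show ((0:ℕ):WithTop ℕ∞) = 0 from rfl, contDiffOn_zero]
    intro w hw
    exact ((my_hasFDeriv hO hW hWO k hk hw).differentiableAt.continuousAt).continuousWithinAt
  | n+1 =>
    rw [show ((n+1:ℕ):WithTop ℕ∞) = (n:WithTop ℕ∞) + 1 by exact_mod_cast rfl,
      contDiffOn_succ_iff_fderiv_of_isOpen hW]
    refine ⟨fun w hw => (my_hasFDeriv hO hW hWO k hk hw).differentiableAt.differentiableWithinAt,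
      by simp, ?_⟩
    have hk₁ : ContDiffOn ℝ (⊤:ℕ∞)
        (fun y : ℝ × E => (fderiv ℝ k y).comp (ContinuousLinearMap.inr ℝ ℝ E)) O :=
      (hk.fderiv_of_isOpen hO (by simp [ENat.coe_top_add_one])).clm_comp contDiffOn_const
    refine (my_param hO hW hWO n _ hk₁).congr fun w hw => ?_
    exact (my_hasFDeriv hO hW hWO k hk hw).fderiv


/-- Lemma 3.4 of the paper: for a `C^∞` diffeomorphism `F : U → U'` with
`F₂(x,0) = 0`, the map `F̃` sends `Ω_V^U` into `Ω_{V'}^{U'}` and is `C^∞` on `Ω_V^U`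
(in the sense of `ContDiffOn`, with one-sided derivatives in `t` at the boundary). -/
theorem stmt3 {p q : ℕ} (U U' : Set ((Fin p → ℝ) × (Fin q → ℝ)))
    (hU : IsOpen U) (hU' : IsOpen U')
    (F G : (Fin p → ℝ) × (Fin q → ℝ) → (Fin p → ℝ) × (Fin q → ℝ))
    (hF : ContDiffOn ℝ (⊤ : ℕ∞) F U) (hG : ContDiffOn ℝ (⊤ : ℕ∞) G U')
    (hFU : F '' U = U') (hGF : ∀ z ∈ U, G (F z) = z) (hFG : ∀ w ∈ U', F (G w) = w)
    (hF2 : ∀ x : Fin p → ℝ, (x, (0 : Fin q → ℝ)) ∈ U → (F (x, 0)).2 = 0) :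
    MapsTo (Ftilde F) (Omega U) (Omega U') ∧
      ContDiffOn ℝ (⊤ : ℕ∞) (Ftilde F) (Omega U) := by
  constructor
  · rintro ⟨x, ξ, t⟩ ⟨htI, hmem⟩
    by_cases ht : t = 0
    · subst ht
      have hx0 : (x, (0 : Fin q → ℝ)) ∈ U := by simpa using hmem
      have hFt : Ftilde F ((x, ξ, (0:ℝ)) : Pt p q)
          = (((F (x, 0)).1, fderiv ℝ (fun η : Fin q → ℝ => (F (x, η)).2) 0 ξ, 0) : Pt p q) := by
        simp only [Ftilde]
        rw [if_pos trivial]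
      refine ⟨?_, ?_⟩ <;> rw [hFt]
      · exact ⟨le_refl 0, zero_le_one⟩
      · show ((F (x, (0:Fin q → ℝ))).1,
            (0:ℝ) • fderiv ℝ (fun η : Fin q → ℝ => (F (x, η)).2) 0 ξ) ∈ U'
        rw [zero_smul]
        have hFx : ((F (x, (0:Fin q → ℝ))).1, (0:Fin q → ℝ)) = F (x, 0) :=
          Prod.ext rfl (hF2 x hx0).symm
        rw [hFx, ← hFU]
        exact mem_image_of_mem F hx0
    · have hFt : Ftilde F ((x, ξ, t) : Pt p q)
          = (((F (x, t • ξ)).1, t⁻¹ • (F (x, t • ξ)).2, t) : Pt p q) := by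
        simp only [Ftilde]
        rw [if_neg ht]
      refine ⟨?_, ?_⟩ <;> rw [hFt]
      · exact htI
      · show ((F (x, t • ξ)).1, t • t⁻¹ • (F (x, t • ξ)).2) ∈ U'
        rw [smul_smul, mul_inv_cancel₀ ht, one_smul, ← hFU]
        exact mem_image_of_mem F hmem
  · rintro ⟨x₀, ξ₀, t₀⟩ hz₀
    by_cases ht₀ : t₀ = 0
    · subst ht₀
      -- the hard case: t₀ = 0
      have hx₀U : (x₀, (0 : Fin q → ℝ)) ∈ U := by simpa using hz₀.2
      obtain ⟨ε, hε, hball⟩ := Metric.isOpen_iff.1 hU _ hx₀U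
      set R : ℝ := ‖ξ₀‖ + 1 with hRdef
      have hR : 0 < R := by positivity
      set δ : ℝ := ε / 2 with hδdef
      have hδ : 0 < δ := by positivity
      set W : Set (Pt p q) := (fun z : Pt p q => z.1) ⁻¹' Metric.ball x₀ δ ∩
        ((fun z : Pt p q => z.2.1) ⁻¹' Metric.ball 0 R ∩
          (fun z : Pt p q => z.2.2) ⁻¹' Metric.ball 0 (δ/R)) with hWdef
      have hW : IsOpen W :=
        (Metric.isOpen_ball.preimage (by fun_prop)).inter
          ((Metric.isOpen_ball.preimage (by fun_prop)).inter
            (Metric.isOpen_ball.preimage (by fun_prop)))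
      have hz₀W : ((x₀, ξ₀, (0:ℝ)) : Pt p q) ∈ W := by
        refine ⟨by simpa using hδ, ?_, ?_⟩
        · simp only [Set.mem_preimage, mem_ball_zero_iff]
          rw [hRdef]; linarith [norm_nonneg ξ₀]
        · simp only [Set.mem_preimage, mem_ball_zero_iff, norm_zero]
          positivity
      have hWprop : ∀ z ∈ W, ∀ s ∈ Icc (0:ℝ) 1, (z.1, s • z.2.2 • z.2.1) ∈ U := by
        rintro ⟨x, ξ, t⟩ ⟨h1, h2, h3⟩ s hs
        apply hball
        have h1' : dist x x₀ < δ := h1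
        have h2' : ‖ξ‖ < R := by simpa using h2
        have h3' : |t| < δ/R := by simpa [Real.norm_eq_abs] using h3
        rw [Metric.mem_ball, Prod.dist_eq]
        apply max_lt (h1'.trans_le (by rw [hδdef]; linarith))
        rw [dist_zero_right, norm_smul, norm_smul, Real.norm_eq_abs, Real.norm_eq_abs]
        have h4 : |t| * ‖ξ‖ < (δ/R) * R :=
          mul_lt_mul'' h3' h2' (abs_nonneg t) (norm_nonneg ξ)
        rw [div_mul_cancel₀ _ (ne_of_gt hR)] at h4
        have h5 : |s| ≤ 1 := abs_le.2 ⟨by linarith [hs.1], hs.2⟩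
        nlinarith [abs_nonneg s, abs_nonneg t, norm_nonneg ξ, mul_nonneg (abs_nonneg t) (norm_nonneg ξ)]
      set O : Set (ℝ × Pt p q) :=
        (fun y : ℝ × Pt p q => (y.2.1, y.1 • y.2.2.2 • y.2.2.1)) ⁻¹' U with hOdef
      have hO : IsOpen O := hU.preimage (by fun_prop)
      set k : ℝ × Pt p q → (Fin q → ℝ) := fun y =>
        (fderiv ℝ F (y.2.1, y.1 • y.2.2.2 • y.2.2.1) ((0 : Fin p → ℝ), y.2.2.1)).2 with hkdef
      have hcin : ContDiff ℝ (⊤:ℕ∞)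
          (fun y : ℝ × Pt p q => (y.2.1, y.1 • y.2.2.2 • y.2.2.1)) :=
        (contDiff_snd.fst).prodMk ((contDiff_fst).smul ((contDiff_snd.snd.snd).smul
          (contDiff_snd.snd.fst)))
      have hk : ContDiffOn ℝ (⊤:ℕ∞) k O := by
        have hdF : ContDiffOn ℝ (⊤:ℕ∞) (fderiv ℝ F) U :=
          hF.fderiv_of_isOpen hU (by simp [ENat.coe_top_add_one])
        have h1 : ContDiffOn ℝ (⊤:ℕ∞)
            (fun y : ℝ × Pt p q => fderiv ℝ F (y.2.1, y.1 • y.2.2.2 • y.2.2.1)) O :=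
          hdF.comp hcin.contDiffOn (fun y hy => hy)
        have h2 : ContDiffOn ℝ (⊤:ℕ∞)
            (fun y : ℝ × Pt p q => (((0 : Fin p → ℝ), y.2.2.1) : (Fin p → ℝ) × (Fin q → ℝ))) O :=
          (contDiff_const.prodMk (contDiff_snd.snd.fst)).contDiffOn
        exact (h1.clm_apply h2).snd
      have hWO : Icc (0:ℝ) 1 ×ˢ W ⊆ O := by
        rintro ⟨s, z⟩ ⟨hs, hz⟩
        exact hWprop z hz s hs
      set h : Pt p q → (Fin q → ℝ) := fun z => ∫ s in (0:ℝ)..1, k (s, z) with hhdef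
      have hsm : ContDiffOn ℝ (⊤:ℕ∞) h W :=
        contDiffOn_infty.2 fun n => my_param hO hW hWO n k hk
      set Φ : Pt p q → Pt p q := fun z => ((F (z.1, z.2.2 • z.2.1)).1, h z, z.2.2) with hΦdef
      have hmC : ContDiff ℝ (⊤:ℕ∞) (fun z : Pt p q => (z.1, z.2.2 • z.2.1)) :=
        contDiff_fst.prodMk ((contDiff_snd.snd).smul (contDiff_snd.fst))
      have hmMaps : MapsTo (fun z : Pt p q => (z.1, z.2.2 • z.2.1)) W U := by
        intro z hz
        have := hWprop z hz 1 (by norm_num)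
        simpa using this
      have hFm : ContDiffOn ℝ (⊤:ℕ∞) (fun z : Pt p q => F (z.1, z.2.2 • z.2.1)) W :=
        hF.comp hmC.contDiffOn hmMaps
      have hΦ : ContDiffOn ℝ (⊤:ℕ∞) Φ W :=
        (hFm.fst).prodMk (hsm.prodMk (contDiff_snd.snd).contDiffOn)
      have hkey : ∀ z ∈ W ∩ Omega U, Ftilde F z = Φ z := by
        rintro ⟨x, ξ, t⟩ ⟨hzW, hzΩ⟩
        by_cases ht : t = 0
        · subst ht
          have hx0 : (x, (0 : Fin q → ℝ)) ∈ U := by simpa using hzΩ.2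
          simp only [Ftilde, Φ, eq_self_iff_true, if_true]
          refine Prod.ext (by rw [zero_smul]) (Prod.ext ?_ rfl)
          show fderiv ℝ (fun η : Fin q → ℝ => (F (x, η)).2) 0 ξ = h (x, ξ, 0)
          have hconst : h ((x, ξ, (0:ℝ)) : Pt p q)
              = (fderiv ℝ F (x, (0:Fin q → ℝ)) ((0 : Fin p → ℝ), ξ)).2 := by
            rw [hhdef]
            simp only [hkdef, smul_zero, zero_smul]
            rw [intervalIntegral.integral_const]
            simp
          rw [hconst]
          have hFd : HasFDerivAt F (fderiv ℝ F (x, (0:Fin q → ℝ))) (x, (0:Fin q → ℝ)) :=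
            ((hF.contDiffAt (hU.mem_nhds hx0)).differentiableAt (by simp)).hasFDerivAt
          have hcomp : HasFDerivAt (fun η : Fin q → ℝ => F (x, η))
              ((fderiv ℝ F (x, (0:Fin q → ℝ))).comp
                (ContinuousLinearMap.inr ℝ (Fin p → ℝ) (Fin q → ℝ))) 0 :=
            hFd.comp 0 (hasFDerivAt_prodMk_right x 0)
          have hsnd : HasFDerivAt (fun η : Fin q → ℝ => (F (x, η)).2)
              ((ContinuousLinearMap.snd ℝ (Fin p → ℝ) (Fin q → ℝ)).comp
                ((fderiv ℝ F (x, (0:Fin q → ℝ))).comp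
                  (ContinuousLinearMap.inr ℝ (Fin p → ℝ) (Fin q → ℝ)))) 0 :=
            (ContinuousLinearMap.snd ℝ (Fin p → ℝ) (Fin q → ℝ)).hasFDerivAt.comp 0 hcomp
          rw [hsnd.fderiv]
          simp
        · simp only [Ftilde, Φ, if_neg ht]
          refine Prod.ext rfl (Prod.ext ?_ rfl)
          show t⁻¹ • (F (x, t • ξ)).2 = h (x, ξ, t)
          set v : Fin q → ℝ := t • ξ with hvdef
          have hsub : ∀ s ∈ Icc (0:ℝ) 1, (x, s • v) ∈ U := fun s hs =>
            hWprop (x, ξ, t) hzW s hs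
          have hx0 : (x, (0 : Fin q → ℝ)) ∈ U := by
            have := hsub 0 (by norm_num); simpa using this
          have hderiv : ∀ s ∈ uIcc (0:ℝ) 1,
              HasDerivAt (fun s : ℝ => (F (x, s • v)).2) (t • k (s, (x, ξ, t))) s := by
            intro s hs
            rw [uIcc_of_le (by norm_num : (0:ℝ) ≤ 1)] at hs
            have hmem : (x, s • v) ∈ U := hsub s hs
            have hFd : HasFDerivAt F (fderiv ℝ F (x, s • v)) (x, s • v) :=
              ((hF.contDiffAt (hU.mem_nhds hmem)).differentiableAt (by simp)).hasFDerivAt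
            have hγ : HasDerivAt (fun s : ℝ => ((x, s • v) : (Fin p → ℝ) × (Fin q → ℝ)))
                (0, v) s := by
              have h1 : HasDerivAt (fun s : ℝ => s • v) v s := by
                simpa using (hasDerivAt_id s).smul_const v
              exact (hasDerivAt_const s x).prodMk h1
            have h2 : HasDerivAt (fun s : ℝ => F (x, s • v))
                (fderiv ℝ F (x, s • v) ((0 : Fin p → ℝ), v)) s := hFd.comp_hasDerivAt s hγ
            have h3 : HasDerivAt (fun s : ℝ => (F (x, s • v)).2)
                ((fderiv ℝ F (x, s • v) ((0 : Fin p → ℝ), v)).2) s :=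
              (ContinuousLinearMap.snd ℝ (Fin p → ℝ) (Fin q → ℝ)).hasFDerivAt.comp_hasDerivAt s h2
            convert h3 using 1
            rw [hkdef]
            show t • (fderiv ℝ F (x, s • t • ξ) ((0 : Fin p → ℝ), ξ)).2 = _
            have hv : (((0 : Fin p → ℝ), v) : (Fin p → ℝ) × (Fin q → ℝ))
                = t • (((0 : Fin p → ℝ), ξ)) := by
              rw [Prod.smul_mk, smul_zero, hvdef]
            rw [hv, ContinuousLinearMap.map_smul]
            rfl
          have hint : IntervalIntegrable (fun s => t • k (s, ((x, ξ, t) : Pt p q))) volume 0 1 := by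
            apply ContinuousOn.intervalIntegrable
            refine ContinuousOn.const_smul (g := fun s => k (s, ((x, ξ, t) : Pt p q))) ?_ t
            apply hk.continuousOn.comp (Continuous.continuousOn (by fun_prop))
            rw [uIcc_of_le (by norm_num : (0:ℝ) ≤ 1)]
            intro s hs
            exact hWO ⟨hs, hzW⟩
          have hFTC := intervalIntegral.integral_eq_sub_of_hasDerivAt hderiv hint
          rw [intervalIntegral.integral_smul] at hFTC
          rw [one_smul, zero_smul, hF2 x hx0, sub_zero] at hFTC
          rw [← hFTC, smul_smul, inv_mul_cancel₀ ht, one_smul]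
      have hΦat : ContDiffAt ℝ (⊤:ℕ∞) Φ ((x₀, ξ₀, (0:ℝ)) : Pt p q) :=
        hΦ.contDiffAt (hW.mem_nhds hz₀W)
      refine (hΦat.contDiffWithinAt).congr_of_eventuallyEq ?_ ?_
      · filter_upwards [self_mem_nhdsWithin,
          mem_nhdsWithin_of_mem_nhds (hW.mem_nhds hz₀W)] with z h1 h2
        exact hkey z ⟨h2, h1⟩
      · exact hkey _ ⟨hz₀W, hz₀⟩
    · -- t₀ ≠ 0
      have hUmem : (x₀, t₀ • ξ₀) ∈ U := hz₀.2
      set W' : Set (Pt p q) := {z | z.2.2 ≠ 0 ∧ (z.1, z.2.2 • z.2.1) ∈ U} with hW'def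
      have hW' : IsOpen W' := by
        have : W' = (fun z : Pt p q => z.2.2) ⁻¹' ({(0:ℝ)}ᶜ) ∩
            (fun z : Pt p q => (z.1, z.2.2 • z.2.1)) ⁻¹' U := rfl
        rw [this]
        exact (isOpen_compl_singleton.preimage (by fun_prop)).inter (hU.preimage (by fun_prop))
      have hmC : ContDiff ℝ (⊤:ℕ∞) (fun z : Pt p q => (z.1, z.2.2 • z.2.1)) :=
        contDiff_fst.prodMk ((contDiff_snd.snd).smul (contDiff_snd.fst))
      have hFm : ContDiffOn ℝ (⊤:ℕ∞) (fun z : Pt p q => F (z.1, z.2.2 • z.2.1)) W' :=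
        hF.comp hmC.contDiffOn (fun z hz => hz.2)
      have hΨ : ContDiffOn ℝ (⊤:ℕ∞) (fun z : Pt p q =>
          (((F (z.1, z.2.2 • z.2.1)).1, z.2.2⁻¹ • (F (z.1, z.2.2 • z.2.1)).2, z.2.2) : Pt p q))
          W' :=
        (hFm.fst).prodMk ((((contDiff_snd.snd).contDiffOn.inv (fun z hz => hz.1)).smul
          hFm.snd).prodMk (contDiff_snd.snd).contDiffOn)
      have hz₀W' : ((x₀, ξ₀, t₀) : Pt p q) ∈ W' := ⟨ht₀, hUmem⟩
      have heq : Ftilde F =ᶠ[nhds ((x₀, ξ₀, t₀) : Pt p q)] (fun z : Pt p q =>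
          (((F (z.1, z.2.2 • z.2.1)).1, z.2.2⁻¹ • (F (z.1, z.2.2 • z.2.1)).2, z.2.2) : Pt p q)) := by
        filter_upwards [hW'.mem_nhds hz₀W'] with z hz
        simp only [Ftilde, if_neg hz.1]
      exact ((hΨ.contDiffAt (hW'.mem_nhds hz₀W')).congr_of_eventuallyEq heq).contDiffWithinAt
end
end

section
/- Let B_n be as above, with product (f ⋆ g)(x,ξ,t) = ∫_{ℝ^n} f(x, η, t)·g(x + tη, ξ − η, t) dη. Then ⋆ is associative: for all f, g, h ∈ B_n and all (x,ξ,t) ∈ ℝ^n × ℝ^n × [0,1], ((f ⋆ g) ⋆ h)(x,ξ,t) = (f ⋆ (g ⋆ h))(x,ξ,t). -/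
open Set MeasureTheory

noncomputable section

/-- The convolution product of Connes' tangent groupoid of `ℝ^n` in the global chart
`(x,y,t) ↦ (x,(y−x)/t,t)`: `(f ⋆ g)(x,ξ,t) = ∫_{ℝ^n} f(x,η,t)·g(x+tη, ξ−η, t) dη`. -/
noncomputable def bconv {n : ℕ} (f g : Pt n n → ℂ) : Pt n n → ℂ :=
  fun z => ∫ η : Fin n → ℝ, f (z.1, η, z.2.2) * g (z.1 + z.2.2 • η, z.2.1 - η, z.2.2)

lemma foldr_id_of_mem {α : Type*} (L : List ((α → ℂ) → α → ℂ)) (hL : ∀ x ∈ L, x = id) :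
    L.foldr (· ∘ ·) id = id := by
  induction L with
  | nil => rfl
  | cons a L ih =>
    rw [List.foldr_cons, hL a (by simp), ih (fun x hx => hL x (by simp [hx]))]
    rfl

lemma mixedD_zero {p N : ℕ} (s : Set (Pt p N)) (g : Pt p N → ℂ) :
    mixedD s 0 0 0 g = g := by
  unfold mixedD
  rw [foldr_id_of_mem _ (by intro x hx; rw [List.mem_ofFn] at hx; obtain ⟨i, hi⟩ := hx; simp [← hi]),
    foldr_id_of_mem _ (by intro x hx; rw [List.mem_ofFn] at hx; obtain ⟨j, hj⟩ := hx; simp [← hj])]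
  simp

lemma decay_bound {n : ℕ} {g : Pt n n → ℂ}
    (hg : RapidDecay (univ : Set ((Fin n → ℝ) × (Fin n → ℝ))) g) (k : ℕ) :
    ∃ C > 0, ∀ z : Pt n n, z.2.2 ∈ Icc (0 : ℝ) 1 →
      ‖g z‖ ≤ C / (1 + ‖z.2.1‖ ^ 2) ^ k := by
  obtain ⟨C, hC, hbd⟩ := hg k 0 0 0
  refine ⟨C, hC, fun z hz => ?_⟩
  have h1 : (0 : ℝ) < (1 + ‖z.2.1‖ ^ 2) ^ k := by positivity
  rw [le_div_iff₀ h1, mul_comm]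
  have := hbd z ⟨hz, mem_univ _⟩
  rwa [mixedD_zero] at this

lemma key_ineq (r : ℕ) {a b c : ℝ} (ha : 0 ≤ a) (hb : 0 ≤ b) (hc : 0 ≤ c) (htri : c ≤ a + b) :
    (1 + a) ^ r * (1 + c) ^ r ≤ 4 ^ r * ((1 + a ^ 2) ^ r * (1 + b ^ 2) ^ r) := by
  have h1 : (1 + a) * (1 + c) ≤ 4 * ((1 + a ^ 2) * (1 + b ^ 2)) := by
    nlinarith [sq_nonneg (1 - a), sq_nonneg (1 - b), sq_nonneg (a - b), sq_nonneg (a * b),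
      mul_nonneg ha hb, sq_nonneg a, sq_nonneg b, sq_nonneg (a + b), sq_nonneg (a*b - 1),
      mul_nonneg (mul_nonneg ha ha) hb, mul_nonneg (mul_nonneg ha hb) hb]
  calc (1 + a) ^ r * (1 + c) ^ r = ((1 + a) * (1 + c)) ^ r := (mul_pow _ _ _).symm
    _ ≤ (4 * ((1 + a ^ 2) * (1 + b ^ 2))) ^ r := by
        apply pow_le_pow_left₀ (by positivity) h1
    _ = 4 ^ r * ((1 + a ^ 2) ^ r * (1 + b ^ 2) ^ r) := by rw [mul_pow, mul_pow]

/-- associativity part of the main Theorem of the paper for Connes' tangent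
groupoid of `ℝ^n`: the product `⋆` on `B_n = MemSrc univ` is associative at every point
`(x,ξ,t) ∈ ℝ^n × ℝ^n × [0,1]`. -/
theorem stmt7 {n : ℕ} (f g h : Pt n n → ℂ)
    (hf : MemSrc (univ : Set ((Fin n → ℝ) × (Fin n → ℝ))) f)
    (hg : MemSrc (univ : Set ((Fin n → ℝ) × (Fin n → ℝ))) g)
    (hh : MemSrc (univ : Set ((Fin n → ℝ) × (Fin n → ℝ))) h) :
    ∀ z : Pt n n, z.2.2 ∈ Icc (0 : ℝ) 1 →
      bconv (bconv f g) h z = bconv f (bconv g h) z := by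
  obtain ⟨hfs, -, hfd⟩ := hf
  obtain ⟨hgs, -, hgd⟩ := hg
  obtain ⟨hhs, -, hhd⟩ := hh
  rintro ⟨x, ξ, t⟩ ht
  set r : ℕ := n + 1 with hr
  obtain ⟨Cf, hCf, hfb⟩ := decay_bound hfd r
  obtain ⟨Cg, hCg, hgb⟩ := decay_bound hgd r
  obtain ⟨Ch, hCh, hhb⟩ := decay_bound hhd 0
  -- the double integrand
  set F : (Fin n → ℝ) → (Fin n → ℝ) → ℂ := fun η ζ =>
    f (x, η, t) * g (x + t • η, ζ - η, t) * h (x + t • ζ, ξ - ζ, t) with hF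
  -- continuity
  have cont_of : ∀ (u : Pt n n → ℂ), ContDiffOn ℝ (⊤ : ℕ∞) u
      (Omega (univ : Set ((Fin n → ℝ) × (Fin n → ℝ)))) →
      ∀ (φ : ((Fin n → ℝ) × (Fin n → ℝ)) → Pt n n), Continuous φ →
      (∀ p, (φ p).2.2 = t) → Continuous (fun p => u (φ p)) := by
    intro u hu φ hφ hφt
    rw [← continuousOn_univ]
    exact (hu.continuousOn.comp hφ.continuousOn (fun p _ => ⟨by rw [hφt p]; exact ht, mem_univ _⟩))
  have c1 : Continuous (fun p : (Fin n → ℝ) × (Fin n → ℝ) => f (x, p.1, t)) :=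
    cont_of f hfs _ (by fun_prop) (fun p => rfl)
  have c2 : Continuous (fun p : (Fin n → ℝ) × (Fin n → ℝ) => g (x + t • p.1, p.2 - p.1, t)) :=
    cont_of g hgs _ (by fun_prop) (fun p => rfl)
  have c3 : Continuous (fun p : (Fin n → ℝ) × (Fin n → ℝ) => h (x + t • p.2, ξ - p.2, t)) :=
    cont_of h hhs _ (by fun_prop) (fun p => rfl)
  -- the integrable majorant
  have hrgt : ((Module.finrank ℝ (Fin n → ℝ) : ℝ)) < (r : ℝ) := by
    simp [hr]
  have hint : Integrable (fun v : Fin n → ℝ => ((1 + ‖v‖) ^ r)⁻¹) := by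
    have := integrable_one_add_norm (E := Fin n → ℝ) (μ := volume) hrgt
    refine this.congr (Filter.Eventually.of_forall fun v => ?_)
    show (1 + ‖v‖) ^ (-(r:ℝ)) = ((1 + ‖v‖) ^ r)⁻¹
    rw [Real.rpow_neg (by positivity), Real.rpow_natCast]
  have hmaj : Integrable (fun p : (Fin n → ℝ) × (Fin n → ℝ) =>
      (Cf * Cg * Ch * 4 ^ r) * (((1 + ‖p.1‖) ^ r)⁻¹ * ((1 + ‖p.2‖) ^ r)⁻¹)) := by
    rw [Measure.volume_eq_prod]
    exact (hint.mul_prod hint).const_mul _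
  -- the bound
  have hbound : ∀ p : (Fin n → ℝ) × (Fin n → ℝ), ‖F p.1 p.2‖ ≤
      (Cf * Cg * Ch * 4 ^ r) * (((1 + ‖p.1‖) ^ r)⁻¹ * ((1 + ‖p.2‖) ^ r)⁻¹) := by
    rintro ⟨η, ζ⟩
    have hf1 := hfb (x, η, t) ht
    have hg1 := hgb (x + t • η, ζ - η, t) ht
    have hh1 := hhb (x + t • ζ, ξ - ζ, t) ht
    simp only [pow_zero, div_one] at hh1
    have e1 : ‖F η ζ‖ = ‖f (x, η, t)‖ * ‖g (x + t • η, ζ - η, t)‖ * ‖h (x + t • ζ, ξ - ζ, t)‖ := by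
      simp [hF, norm_mul]
    rw [e1]
    have step1 : ‖f (x, η, t)‖ * ‖g (x + t • η, ζ - η, t)‖ * ‖h (x + t • ζ, ξ - ζ, t)‖ ≤
        (Cf / (1 + ‖η‖ ^ 2) ^ r) * (Cg / (1 + ‖ζ - η‖ ^ 2) ^ r) * Ch := by
      gcongr <;> positivity
    refine step1.trans ?_
    have key := key_ineq r (norm_nonneg η) (norm_nonneg (ζ - η)) (norm_nonneg ζ)
      (by have := norm_sub_le_norm_sub_add_norm_sub ζ η 0; simp at this; linarith)
    have hP : (0:ℝ) < (1 + ‖η‖ ^ 2) ^ r := by positivity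
    have hQ : (0:ℝ) < (1 + ‖ζ - η‖ ^ 2) ^ r := by positivity
    have hA : (0:ℝ) < (1 + ‖η‖) ^ r := by positivity
    have hB : (0:ℝ) < (1 + ‖ζ‖) ^ r := by positivity
    rw [div_mul_div_comm, div_mul_eq_mul_div, div_le_iff₀ (by positivity)]
    have expand : Cf * Cg * Ch * 4 ^ r * (((1 + ‖η‖) ^ r)⁻¹ * ((1 + ‖ζ‖) ^ r)⁻¹) *
        ((1 + ‖η‖ ^ 2) ^ r * (1 + ‖ζ - η‖ ^ 2) ^ r) =
        (Cf * Cg * Ch) * ((4 ^ r * ((1 + ‖η‖ ^ 2) ^ r * (1 + ‖ζ - η‖ ^ 2) ^ r)) /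
          ((1 + ‖η‖) ^ r * (1 + ‖ζ‖) ^ r)) := by
      field_simp
    rw [expand]
    have h2 : (1:ℝ) ≤ (4 ^ r * ((1 + ‖η‖ ^ 2) ^ r * (1 + ‖ζ - η‖ ^ 2) ^ r)) /
        ((1 + ‖η‖) ^ r * (1 + ‖ζ‖) ^ r) := by
      rw [le_div_iff₀ (by positivity), one_mul]
      exact key
    nlinarith [mul_pos (mul_pos hCf hCg) hCh]
  -- integrability of the uncurried integrand
  have hFi : Integrable (Function.uncurry F) := by
    refine hmaj.mono' ?_ (Filter.Eventually.of_forall fun p => hbound p)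
    exact ((c1.mul c2).mul c3).aestronglyMeasurable
  -- now compute both sides
  have LHS : bconv (bconv f g) h (x, ξ, t) = ∫ ζ, ∫ η, F η ζ := by
    unfold bconv
    refine integral_congr_ae (Filter.Eventually.of_forall fun ζ => ?_)
    simp only [hF]
    rw [← integral_mul_const]
  have RHS : bconv f (bconv g h) (x, ξ, t) = ∫ η, ∫ ζ, F η ζ := by
    unfold bconv
    refine integral_congr_ae (Filter.Eventually.of_forall fun η => ?_)
    simp only [hF]
    rw [← integral_const_mul]
    have trans2 := integral_sub_right_eq_self (μ := (volume : Measure (Fin n → ℝ)))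
      (fun w => f (x, η, t) * (g (x + t • η, w, t) * h (x + t • η + t • w, ξ - η - w, t))) η
    rw [← trans2]
    refine integral_congr_ae (Filter.Eventually.of_forall fun ζ => ?_)
    have e2 : x + t • η + t • (ζ - η) = x + t • ζ := by
      rw [smul_sub]; abel
    have e3 : ξ - η - (ζ - η) = ξ - ζ := by abel
    simp only
    rw [e2, e3]
    ring
  rw [LHS, RHS]
  rw [Measure.volume_eq_prod] at hFi
  exact (integral_integral_swap hFi).symm
end
end

section
/- Let g ∈ S_{r,c}(Ω_V^U). Then the evaluation at zero, g₀(x,ξ) := g(x,ξ,0), defined for x ∈ V and ξ ∈ ℝ^q, satisfies: (i) g₀ is C^∞ on V × ℝ^q; (ii) there exists a compact set K₀ ⊆ V such that g₀(x,ξ) = 0 for all x ∉ K₀ and all ξ ∈ ℝ^q; (iii) for all k ∈ ℕ, l ∈ ℕ^p, α ∈ ℕ^q there is C > 0 with (1 + ‖ξ‖²)^k · |∂_x^l ∂_ξ^α g₀(x,ξ)| ≤ C on V × ℝ^q. In other words, the evaluation map e₀ sends S_{r,c}(Ω_V^U) into the Schwartz space 𝒮(V × ℝ^q) of the trivial bundle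 V × ℝ^q → V. -/
open Set MeasureTheory

noncomputable section

/-- Points of `ℝ^p × ℝ^q` (base × fiber). -/
abbrev Pt2 (p q : ℕ) := (Fin p → ℝ) × (Fin q → ℝ)

/-- Directional derivative within a set `s ⊆ ℝ^p × ℝ^q`, as an operator on functions. -/
def mder2 {p q : ℕ} (s : Set (Pt2 p q)) (v : Pt2 p q) (g : Pt2 p q → ℂ) : Pt2 p q → ℂ :=
  fun w => fderivWithin ℝ g s w v

/-- The mixed partial derivative `∂_x^l ∂_ξ^α g` taken within the set `s ⊆ ℝ^p × ℝ^q`. -/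
def mixedD2 {p q : ℕ} (s : Set (Pt2 p q)) (l : Fin p → ℕ) (α : Fin q → ℕ)
    (g : Pt2 p q → ℂ) : Pt2 p q → ℂ :=
  (List.ofFn fun i : Fin p =>
      (mder2 s ((Pi.single i 1 : Fin p → ℝ), 0))^[l i]).foldr (· ∘ ·) id <|
    (List.ofFn fun j : Fin q =>
      (mder2 s (0, (Pi.single j 1 : Fin q → ℝ)))^[α j]).foldr (· ∘ ·) id g

/-! ### Auxiliary material for the proof of `stmt11`. -/

open Filter Topology

/-- The canonical inclusion `ℝ^p × ℝ^q → ℝ^p × ℝ^q × ℝ`, `w ↦ (w.1, w.2, 0)`,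
as a continuous linear map. -/
def iotaL (p q : ℕ) : Pt2 p q →L[ℝ] Pt p q :=
  (ContinuousLinearMap.fst ℝ _ _).prod
    (((ContinuousLinearMap.snd ℝ (Fin p → ℝ) (Fin q → ℝ))).prod 0)

/-- The set `V × ℝ^q` where `V = {x : (x,0) ∈ U}`. -/
def Vset {p q : ℕ} (U : Set ((Fin p → ℝ) × (Fin q → ℝ))) : Set (Pt2 p q) :=
  {w : Pt2 p q | (w.1, (0 : Fin q → ℝ)) ∈ U}

lemma openV {p q : ℕ} {U : Set ((Fin p → ℝ) × (Fin q → ℝ))} (hU : IsOpen U) :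
    IsOpen (Vset U) :=
  hU.preimage (continuous_fst.prodMk continuous_const)

lemma mapsToV {p q : ℕ} {U : Set ((Fin p → ℝ) × (Fin q → ℝ))} :
    MapsTo (iotaL p q) (Vset U) (Omega U) := by
  intro w hw
  refine ⟨⟨le_rfl, zero_le_one⟩, ?_⟩
  simpa [iotaL, Vset] using hw

lemma uniqueDiffOmega {p q : ℕ} {U : Set ((Fin p → ℝ) × (Fin q → ℝ))} (hU : IsOpen U) :
    UniqueDiffOn ℝ (Omega U) := by
  have hT : UniqueDiffOn ℝ {z : Pt p q | z.2.2 ∈ Icc (0:ℝ) 1} := by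
    apply uniqueDiffOn_convex
    · intro z hz z' hz' a b ha hb hab
      exact (convex_Icc (0:ℝ) 1) hz hz' ha hb hab
    · have hop : IsOpen {z : Pt p q | z.2.2 ∈ Ioo (0:ℝ) 1} :=
        (isOpen_Ioo).preimage (continuous_snd.snd)
      have hsub : {z : Pt p q | z.2.2 ∈ Ioo (0:ℝ) 1} ⊆
          interior {z : Pt p q | z.2.2 ∈ Icc (0:ℝ) 1} :=
        interior_maximal (fun z hz => ⟨hz.1.le, hz.2.le⟩) hop
      exact ⟨(0, 0, (1:ℝ)/2), hsub (by norm_num)⟩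
  have hF : Continuous (fun z : Pt p q => (z.1, z.2.2 • z.2.1)) :=
    continuous_fst.prodMk ((continuous_snd.snd).smul (continuous_snd.fst))
  intro z hz
  have : Omega U = {z : Pt p q | z.2.2 ∈ Icc (0:ℝ) 1} ∩
      (fun z : Pt p q => (z.1, z.2.2 • z.2.1)) ⁻¹' U := rfl
  rw [this]
  exact (hT z hz.1).inter ((hU.preimage hF).mem_nhds hz.2)

/-- The pair `(G, G2)` is "good" if `G` is smooth on `Ω` and `G2` is the restriction
of `G` to the `t = 0` slice. -/
def Good {p q : ℕ} (U : Set ((Fin p → ℝ) × (Fin q → ℝ)))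
    (G : Pt p q → ℂ) (G2 : Pt2 p q → ℂ) : Prop :=
  ContDiffOn ℝ (⊤ : ℕ∞) G (Omega U) ∧ ∀ w ∈ Vset U, G2 w = G (iotaL p q w)

lemma Good.step {p q : ℕ} {U : Set ((Fin p → ℝ) × (Fin q → ℝ))} (hU : IsOpen U)
    {G : Pt p q → ℂ} {G2 : Pt2 p q → ℂ} (h : Good U G G2) (v : Pt2 p q) :
    Good U (mder (Omega U) (v.1, v.2, 0) G) (mder2 (Vset U) v G2) := by
  constructor
  · exact (h.1.fderivWithin (uniqueDiffOmega hU) (by exact_mod_cast le_top)).clm_apply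
      contDiffOn_const
  · intro w hw
    have hG : HasFDerivWithinAt G (fderivWithin ℝ G (Omega U) (iotaL p q w)) (Omega U)
        (iotaL p q w) :=
      ((h.1.differentiableOn (by simp)) _ (mapsToV hw)).hasFDerivWithinAt
    have hcomp : HasFDerivWithinAt (G ∘ (iotaL p q))
        ((fderivWithin ℝ G (Omega U) (iotaL p q w)).comp (iotaL p q)) (Vset U) w :=
      hG.comp w ((iotaL p q).hasFDerivAt.hasFDerivWithinAt) mapsToV
    have h1 : fderivWithin ℝ G2 (Vset U) w
        = fderivWithin ℝ (G ∘ (iotaL p q)) (Vset U) w :=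
      fderivWithin_congr (fun y hy => h.2 y hy) (h.2 w hw)
    have h2 := hcomp.fderivWithin ((openV hU).uniqueDiffOn w hw)
    show fderivWithin ℝ G2 (Vset U) w v = _
    rw [h1, h2]
    rfl

lemma Good.iter {p q : ℕ} {U : Set ((Fin p → ℝ) × (Fin q → ℝ))} (hU : IsOpen U)
    {G : Pt p q → ℂ} {G2 : Pt2 p q → ℂ} (h : Good U G G2) (v : Pt2 p q) (n : ℕ) :
    Good U ((mder (Omega U) (v.1, v.2, 0))^[n] G) ((mder2 (Vset U) v)^[n] G2) := by
  induction n with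
  | zero => simpa using h
  | succ n ih =>
      rw [Function.iterate_succ', Function.iterate_succ']
      exact ih.step hU v

lemma Good.fold {p q : ℕ} {U : Set ((Fin p → ℝ) × (Fin q → ℝ))} (hU : IsOpen U) :
    ∀ {n : ℕ} (d : Fin n → Pt2 p q) (c : Fin n → ℕ) {G : Pt p q → ℂ} {G2 : Pt2 p q → ℂ},
    Good U G G2 →
    Good U ((List.ofFn fun i => (mder (Omega U) ((d i).1, (d i).2, 0))^[c i]).foldr (· ∘ ·) id G)
      ((List.ofFn fun i => (mder2 (Vset U) (d i))^[c i]).foldr (· ∘ ·) id G2) := by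
  intro n
  induction n with
  | zero => intro d c G G2 h; simpa using h
  | succ n ih =>
      intro d c G G2 h
      rw [List.ofFn_succ, List.ofFn_succ, List.foldr_cons, List.foldr_cons]
      exact (ih (fun i => d i.succ) (fun i => c i.succ) h).iter hU (d 0) (c 0)

/-- local form of the evaluation morphism `e₀` of the paper: for
`g ∈ S_{r,c}(Ω_V^U)`, the evaluation `g₀(x,ξ) = g(x,ξ,0)` on `V × ℝ^q`
(where `V = {x : (x,0) ∈ U}`) is `C^∞`, vanishes for `x` outside a compact subset of `V`,
and is Schwartz in `ξ` uniformly; i.e. `e₀` maps `S_{r,c}(Ω_V^U)` into `𝒮(V × ℝ^q)`. -/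
theorem stmt11 {p q : ℕ} (U : Set ((Fin p → ℝ) × (Fin q → ℝ))) (hU : IsOpen U)
    (g : Pt p q → ℂ) (hg : MemSrc U g) :
    ContDiffOn ℝ (⊤ : ℕ∞) (fun w : Pt2 p q => g (w.1, w.2, 0))
      {w : Pt2 p q | (w.1, (0 : Fin q → ℝ)) ∈ U} ∧
    (∃ K₀ : Set (Fin p → ℝ), IsCompact K₀ ∧
      (∀ x ∈ K₀, (x, (0 : Fin q → ℝ)) ∈ U) ∧
      ∀ (x : Fin p → ℝ) (ξ : Fin q → ℝ), (x, (0 : Fin q → ℝ)) ∈ U → x ∉ K₀ →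
        g (x, ξ, 0) = 0) ∧
    ∀ (k : ℕ) (l : Fin p → ℕ) (α : Fin q → ℕ), ∃ C > 0,
      ∀ w ∈ {w : Pt2 p q | (w.1, (0 : Fin q → ℝ)) ∈ U},
        (1 + ‖w.2‖ ^ 2) ^ k *
          ‖mixedD2 {w : Pt2 p q | (w.1, (0 : Fin q → ℝ)) ∈ U} l α
            (fun w : Pt2 p q => g (w.1, w.2, 0)) w‖ ≤ C := by
  obtain ⟨hsm, ⟨K, ⟨hKc, hKU, hK0⟩, hKsupp⟩, hrd⟩ := hg
  refine ⟨?_, ?_, ?_⟩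
  · -- (i) smoothness
    exact hsm.comp ((iotaL p q).contDiff.contDiffOn) (mapsToV (U := U))
  · -- (ii) compact support in the base
    refine ⟨Prod.fst '' (K ∩ {z : Pt p q | z.2.2 = 0}), ?_, ?_, ?_⟩
    · exact (hKc.inter_right (isClosed_eq (continuous_snd.snd) continuous_const)).image
        continuous_fst
    · rintro x ⟨z, ⟨hzK, hz0⟩, rfl⟩
      have h1 := (hKU z hzK).1
      rw [hK0 z hzK hz0] at h1
      exact h1
    · intro x ξ hxU hxK
      have h00 : ((x, (0:ℝ) • ξ, (0:ℝ)) : Pt p q) ∉ K := by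
        intro hmem
        exact hxK ⟨(x, (0:ℝ) • ξ, (0:ℝ)), ⟨hmem, rfl⟩, rfl⟩
      have hm : Continuous (fun t : ℝ => ((x, t • ξ, t) : Pt p q)) := by
        exact continuous_const.prodMk ((continuous_id.smul continuous_const).prodMk
          continuous_id)
      have hev1 : ∀ᶠ t in 𝓝 (0:ℝ), ((x, t • ξ, t) : Pt p q) ∉ K := by
        have := hm.continuousAt (x := (0:ℝ)) |>.preimage_mem_nhds
          (hKc.isClosed.isOpen_compl.mem_nhds h00)
        filter_upwards [this] with t ht using ht
      have hev2 : ∀ᶠ t in 𝓝 (0:ℝ), (x, t • ξ) ∈ U := by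
        have hc : Continuous (fun t : ℝ => ((x, t • ξ) : (Fin p → ℝ) × (Fin q → ℝ))) :=
          continuous_const.prodMk (continuous_id.smul continuous_const)
        have h0 : ((x, (0:ℝ) • ξ) : (Fin p → ℝ) × (Fin q → ℝ)) ∈ U := by
          simpa [zero_smul] using hxU
        have := hc.continuousAt (x := (0:ℝ)) |>.preimage_mem_nhds (hU.mem_nhds h0)
        filter_upwards [this] with t ht using ht
      have hIoo : Ioo (0:ℝ) 1 ∈ 𝓝[>] (0:ℝ) :=
        Ioo_mem_nhdsGT_of_mem ⟨le_rfl, zero_lt_one⟩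
      have hev : ∀ᶠ t in 𝓝[>] (0:ℝ),
          ((x, ξ, t) : Pt p q) ∈ Omega U ∧ g (x, ξ, t) = 0 := by
        filter_upwards [hev1.filter_mono nhdsWithin_le_nhds,
          hev2.filter_mono nhdsWithin_le_nhds, hIoo] with t h1 h2 h3
        have hΩ : ((x, ξ, t) : Pt p q) ∈ Omega U := ⟨⟨h3.1.le, h3.2.le⟩, h2⟩
        exact ⟨hΩ, hKsupp (x, ξ, t) hΩ (ne_of_gt h3.1) h1⟩
      have hmem0 : ((x, ξ, (0:ℝ)) : Pt p q) ∈ Omega U := by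
        refine ⟨⟨le_rfl, zero_le_one⟩, ?_⟩
        simpa [zero_smul] using hxU
      have hcont : ContinuousWithinAt g (Omega U) (x, ξ, 0) :=
        hsm.continuousOn _ hmem0
      have hpathc : Continuous (fun t : ℝ => ((x, ξ, t) : Pt p q)) :=
        continuous_const.prodMk (continuous_const.prodMk continuous_id)
      have hpath : Filter.Tendsto (fun t : ℝ => ((x, ξ, t) : Pt p q)) (𝓝[>] (0:ℝ))
          (𝓝[Omega U] ((x, ξ, 0) : Pt p q)) := by
        rw [tendsto_nhdsWithin_iff]
        exact ⟨(hpathc.tendsto 0).mono_left nhdsWithin_le_nhds,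
          hev.mono fun t ht => ht.1⟩
      have hlim1 : Filter.Tendsto (fun t : ℝ => g (x, ξ, t)) (𝓝[>] (0:ℝ))
          (𝓝 (g (x, ξ, 0))) := hcont.tendsto.comp hpath
      have hlim2 : Filter.Tendsto (fun t : ℝ => g (x, ξ, t)) (𝓝[>] (0:ℝ)) (𝓝 0) :=
        Filter.Tendsto.congr' (hev.mono fun t ht => ht.2.symm) tendsto_const_nhds
      exact tendsto_nhds_unique hlim1 hlim2
  · -- (iii) rapid decay
    intro k l α
    obtain ⟨C, hC, hCb⟩ := hrd k 0 l α
    have hGood : Good U g (fun w : Pt2 p q => g (w.1, w.2, 0)) :=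
      ⟨hsm, fun w _ => rfl⟩
    have hΞ := Good.fold hU (fun j : Fin q => ((0 : Fin p → ℝ), Pi.single j 1)) α hGood
    have hX := Good.fold hU (fun i : Fin p => ((Pi.single i 1 : Fin p → ℝ), (0 : Fin q → ℝ)))
      l hΞ
    refine ⟨C, hC, ?_⟩
    intro w hw
    have hkey : mixedD2 {w : Pt2 p q | (w.1, (0 : Fin q → ℝ)) ∈ U} l α
        (fun w : Pt2 p q => g (w.1, w.2, 0)) w
        = mixedD (Omega U) l α 0 g (iotaL p q w) := hX.2 w hw
    have hzΩ : iotaL p q w ∈ Omega U := mapsToV hw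
    have := hCb (iotaL p q w) hzΩ
    rw [hkey]
    simpa [iotaL] using this
end
end

section
/- Let g ∈ S_{r,c}(Ω_V^U) and fix t ∈ (0,1]. Then the function e_t(g) : U → ℂ defined by e_t(g)(x,ζ) = g(x, ζ/t, t) is C^∞ on U and has compact support contained in U. -/
open Set MeasureTheory

noncomputable section

/-- local form of the evaluation morphism `e_t`, `t ≠ 0`, of the paper:
for `g ∈ S_{r,c}(Ω_V^U)` and `t ∈ (0,1]`, the function `e_t(g)(x,ζ) = g(x, ζ/t, t)`
is `C^∞` on `U` and has compact support contained in `U`. -/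
theorem stmt12 {p q : ℕ} (U : Set ((Fin p → ℝ) × (Fin q → ℝ))) (hU : IsOpen U)
    (g : Pt p q → ℂ) (hg : MemSrc U g) (t : ℝ) (ht : t ∈ Ioc (0 : ℝ) 1) :
    ContDiffOn ℝ (⊤ : ℕ∞) (fun w : (Fin p → ℝ) × (Fin q → ℝ) => g (w.1, t⁻¹ • w.2, t)) U ∧
    ∃ K : Set ((Fin p → ℝ) × (Fin q → ℝ)), IsCompact K ∧ K ⊆ U ∧
      ∀ w ∈ U, w ∉ K → g (w.1, t⁻¹ • w.2, t) = 0 := by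
  obtain ⟨ht0, ht1⟩ := ht
  have hmaps : ∀ w ∈ U, ((w.1, t⁻¹ • w.2, t) : Pt p q) ∈ Omega U := by
    intro w hw
    refine ⟨⟨le_of_lt ht0, ht1⟩, ?_⟩
    have : t • t⁻¹ • w.2 = w.2 := by
      rw [smul_smul, mul_inv_cancel₀ (ne_of_gt ht0), one_smul]
    simpa [this] using hw
  constructor
  · have hφ : ContDiff ℝ (⊤ : ℕ∞)
        (fun w : (Fin p → ℝ) × (Fin q → ℝ) => ((w.1, t⁻¹ • w.2, t) : Pt p q)) := by
      fun_prop
    exact hg.1.comp hφ.contDiffOn hmaps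
  · obtain ⟨K, ⟨hKc, hKU, _⟩, hsupp⟩ := hg.2.1
    refine ⟨(fun z : Pt p q => (z.1, z.2.1)) '' (K ∩ {z | z.2.2 = t}), ?_, ?_, ?_⟩
    · exact ((hKc.inter_right (isClosed_eq continuous_snd.snd continuous_const)).image
        (continuous_fst.prodMk continuous_snd.fst))
    · rintro w ⟨z, ⟨hzK, _⟩, rfl⟩
      exact (hKU z hzK).1
    · intro w hw hwK
      refine hsupp _ (hmaps w hw) (ne_of_gt ht0) ?_
      intro hmem
      apply hwK
      refine ⟨(w.1, t • t⁻¹ • w.2, t), ⟨hmem, rfl⟩, ?_⟩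
      simp [smul_smul, mul_inv_cancel₀ (ne_of_gt ht0)]
end
end

section
/- Let U ⊆ ℝ^p × ℝ^q be open and let W = {(x,η,ξ) ∈ ℝ^p × ℝ^q × ℝ^q : (x,η) ∈ U and (x,ξ) ∈ U}, an open subset of ℝ^p × ℝ^{2q} with {x : (x,0,0) ∈ W} = V. If f, g ∈ S_{r,c}(Ω_V^U), then the function h(x,η,ξ,t) := f(x,η,t)·g(x,ξ,t) belongs to S_{r,c}(Ω_V^W). -/
open Set MeasureTheory

noncomputable section

namespace Aux

variable {p N : ℕ}

/-- Iterated directional derivatives along a list of directions (head applied last). -/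
def chainD (s : Set (Pt p N)) (vs : List (Pt p N)) (g : Pt p N → ℂ) : Pt p N → ℂ :=
  vs.foldr (mder s) g

lemma chainD_nil (s : Set (Pt p N)) (g) : chainD s [] g = g := rfl
lemma chainD_cons (s : Set (Pt p N)) (v vs g) : chainD s (v :: vs) g = mder s v (chainD s vs g) := rfl
lemma chainD_append (s : Set (Pt p N)) (vs ws g) :
    chainD s (vs ++ ws) g = chainD s vs (chainD s ws g) := List.foldr_append

lemma chainD_replicate (s : Set (Pt p N)) (m : ℕ) (v g) :
    chainD s (List.replicate m v) g = (mder s v)^[m] g := by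
  induction m with
  | zero => rfl
  | succ m ih =>
    rw [List.replicate_succ, chainD_cons, ih, Function.iterate_succ_apply']

lemma foldr_comp_apply {β : Type*} (L : List (β → β)) (x : β) :
    (L.foldr (· ∘ ·) id) x = L.foldr (fun f a => f a) x := by
  induction L with
  | nil => rfl
  | cons f L ih => simp [List.foldr_cons, Function.comp, ih]

/-- The canonical list of directions corresponding to the multi-index `(l, α, m)`. -/
def dirs (l : Fin p → ℕ) (α : Fin N → ℕ) (m : ℕ) : List (Pt p N) :=
  (List.ofFn fun i => List.replicate (l i) (ex i)).flatten ++
    ((List.ofFn fun j => List.replicate (α j) (efib j)).flatten ++ List.replicate m et)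

lemma mixedD_eq_chainD (s : Set (Pt p N)) (l α m g) :
    mixedD s l α m g = chainD s (dirs l α m) g := by
  unfold mixedD dirs
  rw [chainD_append, chainD_append, chainD_replicate]
  have key : ∀ (M : ℕ) (e : Fin M → Pt p N) (c : Fin M → ℕ) (G : Pt p N → ℂ),
      (List.ofFn fun i => (mder s (e i))^[c i]).foldr (· ∘ ·) id G
        = chainD s (List.ofFn fun i => List.replicate (c i) (e i)).flatten G := by
    intro M e c G
    rw [foldr_comp_apply]
    unfold chainD
    rw [List.foldr_flatten, List.ofFn_eq_map, List.ofFn_eq_map, List.foldr_map, List.foldr_map]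
    have : (fun (i : Fin M) (a : Pt p N → ℂ) => (mder s (e i))^[c i] a)
        = fun i a => List.foldr (mder s) a (List.replicate (c i) (e i)) := by
      funext i a
      rw [← chainD_replicate s (c i) (e i) a]; rfl
    rw [this]
  rw [key, key]

variable {p N q : ℕ}

lemma uniqueDiffOn_Omega {U : Set ((Fin p → ℝ) × (Fin N → ℝ))} (hU : IsOpen U) :
    UniqueDiffOn ℝ (Omega U) := by
  have hopen : IsOpen {z : Pt p N | (z.1, z.2.2 • z.2.1) ∈ U} := by
    have : Continuous fun z : Pt p N => (z.1, z.2.2 • z.2.1) := by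
      exact continuous_fst.prodMk ((continuous_snd.snd).smul continuous_snd.fst)
    exact this.isOpen_preimage U hU
  have heq : Omega U = ((univ : Set (Fin p → ℝ)) ×ˢ ((univ : Set (Fin N → ℝ)) ×ˢ Icc (0:ℝ) 1))
      ∩ {z : Pt p N | (z.1, z.2.2 • z.2.1) ∈ U} := by
    ext z; simp [Omega, Set.mem_prod, and_comm]
  rw [heq]
  intro z hz
  exact ((uniqueDiffOn_univ.prod (uniqueDiffOn_univ.prod (uniqueDiffOn_Icc one_pos))) z hz.1).inter
    (hopen.mem_nhds hz.2)

lemma top_add_one_le : ((⊤ : ℕ∞) : WithTop ℕ∞) + 1 ≤ ((⊤ : ℕ∞) : WithTop ℕ∞) := by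
  norm_num

lemma one_le_top' : (1 : WithTop ℕ∞) ≤ ((⊤ : ℕ∞) : WithTop ℕ∞) := by
  exact_mod_cast le_top

lemma mder_contDiffOn {s : Set (Pt p N)} (hs : UniqueDiffOn ℝ s) {A : Pt p N → ℂ}
    (hA : ContDiffOn ℝ (⊤ : ℕ∞) A s) (v : Pt p N) : ContDiffOn ℝ (⊤ : ℕ∞) (mder s v A) s := by
  have h1 : ContDiffOn ℝ (⊤ : ℕ∞) (fderivWithin ℝ A s) s :=
    hA.fderivWithin hs top_add_one_le
  exact h1.clm_apply contDiffOn_const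

lemma mder_congr {s : Set (Pt p N)} {F G : Pt p N → ℂ} (h : ∀ y ∈ s, F y = G y)
    {z : Pt p N} (hz : z ∈ s) (v : Pt p N) : mder s v F z = mder s v G z := by
  unfold mder; rw [fderivWithin_congr h (h z hz)]

lemma mder_mul {s : Set (Pt p N)} {F G : Pt p N → ℂ} {z : Pt p N}
    (hsz : UniqueDiffWithinAt ℝ s z) (hF : DifferentiableWithinAt ℝ F s z)
    (hG : DifferentiableWithinAt ℝ G s z) (v : Pt p N) :
    mder s v (fun y => F y * G y) z = mder s v F z * G z + F z * mder s v G z := by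
  unfold mder
  rw [fderivWithin_fun_mul hsz hF hG]
  simp only [ContinuousLinearMap.add_apply, ContinuousLinearMap.smul_apply, smul_eq_mul]
  ring

lemma mder_comp {M : ℕ} {s : Set (Pt p M)} {u : Set (Pt p N)} (L : Pt p M →L[ℝ] Pt p N)
    (hmap : MapsTo L s u) {z : Pt p M} (hsz : UniqueDiffWithinAt ℝ s z)
    {A : Pt p N → ℂ} (hA : DifferentiableWithinAt ℝ A u (L z)) (v : Pt p M) :
    mder s v (A ∘ ⇑L) z = mder u (L v) A (L z) := by
  unfold mder
  rw [fderivWithin_comp z hA (L.differentiable.differentiableAt.differentiableWithinAt) hmap hsz]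
  simp [L.fderivWithin hsz]

lemma diffWithinAt_list_sum {ι : Type*} {s : Set (Pt p N)} {z : Pt p N} (ts : List ι)
    (F : ι → Pt p N → ℂ) (hd : ∀ i ∈ ts, DifferentiableWithinAt ℝ (F i) s z) :
    DifferentiableWithinAt ℝ (fun y => (ts.map fun i => F i y).sum) s z := by
  induction ts with
  | nil => simpa using differentiableWithinAt_const 0
  | cons a ts ih =>
    simp only [List.map_cons, List.sum_cons]
    exact (hd a (by simp)).add (ih fun i hi => hd i (by simp [hi]))

lemma mder_list_sum {ι : Type*} {s : Set (Pt p N)} {z : Pt p N}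
    (hsz : UniqueDiffWithinAt ℝ s z) (ts : List ι) (F : ι → Pt p N → ℂ)
    (hd : ∀ i ∈ ts, DifferentiableWithinAt ℝ (F i) s z) (v : Pt p N) :
    mder s v (fun y => (ts.map fun i => F i y).sum) z
      = (ts.map fun i => mder s v (F i) z).sum := by
  induction ts with
  | nil => simp [mder, fderivWithin_const_apply, hsz]
  | cons a ts ih =>
    simp only [List.map_cons, List.sum_cons]
    have h1 : mder s v (fun y => F a y + (ts.map fun i => F i y).sum) z
        = mder s v (F a) z + mder s v (fun y => (ts.map fun i => F i y).sum) z := by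
      unfold mder
      rw [fderivWithin_fun_add hsz (hd a (by simp)) (diffWithinAt_list_sum ts F
        fun i hi => hd i (by simp [hi]))]
      simp
    rw [h1, ih fun i hi => hd i (by simp [hi])]

/-- Auxiliary continuous linear projections. -/
def fibCLM (p N : ℕ) : Pt p N →L[ℝ] (Fin N → ℝ) :=
  (ContinuousLinearMap.fst ℝ (Fin N → ℝ) ℝ).comp
    (ContinuousLinearMap.snd ℝ (Fin p → ℝ) ((Fin N → ℝ) × ℝ))

def tCLM (p N : ℕ) : Pt p N →L[ℝ] ℝ :=
  (ContinuousLinearMap.snd ℝ (Fin N → ℝ) ℝ).comp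
    (ContinuousLinearMap.snd ℝ (Fin p → ℝ) ((Fin N → ℝ) × ℝ))

/-- The two projections `Pt p (q+q) → Pt p q`. -/
def L1 (p q : ℕ) : Pt p (q + q) →L[ℝ] Pt p q :=
  (ContinuousLinearMap.fst ℝ (Fin p → ℝ) ((Fin (q+q) → ℝ) × ℝ)).prod
    ((ContinuousLinearMap.pi fun j : Fin q =>
      (ContinuousLinearMap.proj (R := ℝ) (φ := fun _ : Fin (q+q) => ℝ) (Fin.castAdd q j)).comp
        (fibCLM p (q+q))).prod (tCLM p (q+q)))

def L2 (p q : ℕ) : Pt p (q + q) →L[ℝ] Pt p q :=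
  (ContinuousLinearMap.fst ℝ (Fin p → ℝ) ((Fin (q+q) → ℝ) × ℝ)).prod
    ((ContinuousLinearMap.pi fun j : Fin q =>
      (ContinuousLinearMap.proj (R := ℝ) (φ := fun _ : Fin (q+q) => ℝ) (Fin.natAdd q j)).comp
        (fibCLM p (q+q))).prod (tCLM p (q+q)))

lemma L1_apply (z : Pt p (q + q)) :
    L1 p q z = (z.1, fun j => z.2.1 (Fin.castAdd q j), z.2.2) := rfl

lemma L2_apply (z : Pt p (q + q)) :
    L2 p q z = (z.1, fun j => z.2.1 (Fin.natAdd q j), z.2.2) := rfl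

def splittings {γ : Type*} : List γ → List (List γ × List γ)
  | [] => [([], [])]
  | v :: vs =>
      ((splittings vs).map fun ab => (v :: ab.1, ab.2))
        ++ ((splittings vs).map fun ab => (ab.1, v :: ab.2))

lemma mem_splittings_sublist {γ : Type*} : ∀ {vs : List γ} {ab : List γ × List γ},
    ab ∈ splittings vs → ab.1.Sublist vs ∧ ab.2.Sublist vs := by
  intro vs
  induction vs with
  | nil => intro ab h; simp [splittings] at h; simp [h]
  | cons v vs ih =>
    intro ab h
    simp only [splittings, List.mem_append, List.mem_map] at h
    rcases h with ⟨a, ha, rfl⟩ | ⟨a, ha, rfl⟩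
    · exact ⟨(ih ha).1.cons₂ v, (ih ha).2.cons v⟩
    · exact ⟨(ih ha).1.cons v, (ih ha).2.cons₂ v⟩

lemma list_sum_map_add {ι : Type*} (l : List ι) (f g : ι → ℂ) :
    (l.map fun i => f i + g i).sum = (l.map f).sum + (l.map g).sum := by
  induction l with
  | nil => simp
  | cons a l ih => simp only [List.map_cons, List.sum_cons, ih]; ring

lemma chainD_contDiffOn {p N : ℕ} {u : Set (Pt p N)} (hu : UniqueDiffOn ℝ u) {A : Pt p N → ℂ}
    (hA : ContDiffOn ℝ (⊤ : ℕ∞) A u) (ws : List (Pt p N)) :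
    ContDiffOn ℝ (⊤ : ℕ∞) (chainD u ws A) u := by
  induction ws with
  | nil => exact hA
  | cons w ws ih => exact mder_contDiffOn hu ih w

section Master

variable {p q : ℕ} {s : Set (Pt p (q + q))} {u : Set (Pt p q)}
  {f g : Pt p q → ℂ} {LA LB : Pt p (q + q) →L[ℝ] Pt p q}

lemma comp_diff (hmA : MapsTo (⇑LA) s u) {A : Pt p q → ℂ}
    (hA : ContDiffOn ℝ (⊤ : ℕ∞) A u) {z : Pt p (q + q)} (hz : z ∈ s) :
    DifferentiableWithinAt ℝ (fun y => A (LA y)) s z := by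
  have h1 : ContDiffOn ℝ (⊤ : ℕ∞) (A ∘ ⇑LA) s :=
    hA.comp (LA.contDiff.contDiffOn) hmA
  exact (h1.differentiableOn (by simp)) z hz

lemma master (hs : UniqueDiffOn ℝ s) (hu : UniqueDiffOn ℝ u)
    (hf : ContDiffOn ℝ (⊤ : ℕ∞) f u) (hg : ContDiffOn ℝ (⊤ : ℕ∞) g u)
    (hmA : MapsTo (⇑LA) s u) (hmB : MapsTo (⇑LB) s u) (vs : List (Pt p (q + q))) :
    ∀ z ∈ s, chainD s vs (fun y => f (LA y) * g (LB y)) z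
      = ((splittings vs).map fun ab =>
          chainD u (ab.1.map (⇑LA)) f (LA z) * chainD u (ab.2.map (⇑LB)) g (LB z)).sum := by
  induction vs with
  | nil =>
    intro z hz
    simp [splittings, chainD]
  | cons v vs ih =>
    intro z hz
    have hz' : UniqueDiffWithinAt ℝ s z := hs z hz
    rw [chainD_cons]
    have e1 : mder s v (chainD s vs fun y => f (LA y) * g (LB y)) z
        = mder s v (fun y => ((splittings vs).map fun ab =>
            chainD u (ab.1.map (⇑LA)) f (LA y) * chainD u (ab.2.map (⇑LB)) g (LB y)).sum) z :=
      mder_congr ih hz v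
    have hdA : ∀ (as : List (Pt p (q + q))) (y : Pt p (q+q)), y ∈ s →
        DifferentiableWithinAt ℝ (fun w => chainD u (as.map (⇑LA)) f (LA w)) s y :=
      fun as y hy => comp_diff hmA (chainD_contDiffOn hu hf _) hy
    have hdB : ∀ (bs : List (Pt p (q + q))) (y : Pt p (q+q)), y ∈ s →
        DifferentiableWithinAt ℝ (fun w => chainD u (bs.map (⇑LB)) g (LB w)) s y :=
      fun bs y hy => comp_diff hmB (chainD_contDiffOn hu hg _) hy
    rw [e1, mder_list_sum hz' _ _
      (fun ab _ => ((hdA ab.1 z hz).mul (hdB ab.2 z hz))) v]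
    have e2 : ∀ ab ∈ splittings vs,
        mder s v (fun y => chainD u (ab.1.map (⇑LA)) f (LA y)
            * chainD u (ab.2.map (⇑LB)) g (LB y)) z
          = chainD u ((v :: ab.1).map (⇑LA)) f (LA z) * chainD u (ab.2.map (⇑LB)) g (LB z)
            + chainD u (ab.1.map (⇑LA)) f (LA z) * chainD u ((v :: ab.2).map (⇑LB)) g (LB z) := by
      intro ab _
      rw [mder_mul hz' (hdA ab.1 z hz) (hdB ab.2 z hz) v]
      have cA : mder s v (fun y => chainD u (ab.1.map (⇑LA)) f (LA y)) z
          = mder u (LA v) (chainD u (ab.1.map (⇑LA)) f) (LA z) :=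
        mder_comp LA hmA hz'
          (((chainD_contDiffOn hu hf _).differentiableOn (by simp)) _ (hmA hz)) v
      have cB : mder s v (fun y => chainD u (ab.2.map (⇑LB)) g (LB y)) z
          = mder u (LB v) (chainD u (ab.2.map (⇑LB)) g) (LB z) :=
        mder_comp LB hmB hz'
          (((chainD_contDiffOn hu hg _).differentiableOn (by simp)) _ (hmB hz)) v
      rw [cA, cB]
      rfl
    rw [List.map_congr_left e2, list_sum_map_add]
    simp only [splittings, List.map_append, List.sum_append, List.map_map]
    rfl

end Master

lemma chainD_zero {p N : ℕ} {u : Set (Pt p N)} (hu : UniqueDiffOn ℝ u) {A : Pt p N → ℂ} :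
    ∀ {ws : List (Pt p N)}, (0 : Pt p N) ∈ ws → ∀ z ∈ u, chainD u ws A z = 0 := by
  intro ws
  induction ws with
  | nil => intro h; simp at h
  | cons w ws ih =>
    intro h z hz
    rcases List.mem_cons.1 h with h0 | h0
    · rw [chainD_cons, ← h0]
      simp [mder]
    · rw [chainD_cons, mder_congr (ih h0) hz w]
      unfold mder
      rw [fderivWithin_const_apply 0]
      simp

lemma sublist_flatten_replicate {D : Type*} : ∀ {κ : ℕ} (cnt : Fin κ → ℕ) (v : Fin κ → D)
    {as : List D}, as.Sublist (List.ofFn fun i => List.replicate (cnt i) (v i)).flatten →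
    ∃ cnt' : Fin κ → ℕ, (∀ i, cnt' i ≤ cnt i) ∧
      as = (List.ofFn fun i => List.replicate (cnt' i) (v i)).flatten := by
  intro κ
  induction κ with
  | zero =>
    intro cnt v as h
    simp only [List.ofFn_zero, List.flatten_nil, List.sublist_nil] at h
    exact ⟨fun i => 0, fun i => i.elim0, by simp [h]⟩
  | succ κ ih =>
    intro cnt v as h
    rw [List.ofFn_succ, List.flatten_cons] at h
    rcases List.sublist_append_iff.mp h with ⟨a, b, rfl, ha, hb⟩
    rcases List.sublist_replicate_iff.mp ha with ⟨k, hk, rfl⟩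
    rcases ih (fun i => cnt i.succ) (fun i => v i.succ) hb with ⟨cnt'', h1, rfl⟩
    refine ⟨Fin.cases k cnt'', ?_, ?_⟩
    · intro i
      induction i using Fin.cases with
      | zero => simpa using hk
      | succ i => simpa using h1 i
    · rw [List.ofFn_succ, List.flatten_cons]
      simp

lemma sublist_dirs {p N : ℕ} {l : Fin p → ℕ} {α : Fin N → ℕ} {m : ℕ} {as : List (Pt p N)}
    (h : as.Sublist (dirs l α m)) :
    ∃ l' α' m', (∀ i, l' i ≤ l i) ∧ (∀ j, α' j ≤ α j) ∧ m' ≤ m ∧ as = dirs l' α' m' := by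
  unfold dirs at h
  rcases List.sublist_append_iff.mp h with ⟨a, rest, rfl, ha, hrest⟩
  rcases List.sublist_append_iff.mp hrest with ⟨b, c, rfl, hb, hc⟩
  rcases sublist_flatten_replicate l ex ha with ⟨l', hl', rfl⟩
  rcases sublist_flatten_replicate α efib hb with ⟨α', hα', rfl⟩
  rcases List.sublist_replicate_iff.mp hc with ⟨m', hm', rfl⟩
  exact ⟨l', α', m', hl', hα', hm', rfl⟩

section Lmaps

variable {p q : ℕ}

lemma L1_ex (i : Fin p) : L1 p q (ex i) = ex i := rfl
lemma L2_ex (i : Fin p) : L2 p q (ex i) = ex i := rfl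
lemma L1_et : L1 p q (et : Pt p (q+q)) = et := rfl
lemma L2_et : L2 p q (et : Pt p (q+q)) = et := rfl

lemma castAdd_ne_natAdd (j j' : Fin q) : Fin.castAdd q j ≠ Fin.natAdd q j' := by
  intro h
  have h1 := congrArg Fin.val h
  simp [Fin.coe_castAdd, Fin.coe_natAdd] at h1
  omega

lemma L1_efib_cast (j : Fin q) : L1 p q (efib (Fin.castAdd q j)) = efib j := by
  rw [L1_apply]
  unfold efib
  refine Prod.ext rfl (Prod.ext ?_ rfl)
  funext j'
  by_cases h : j' = j
  · subst h; simp
  · have : Fin.castAdd q j' ≠ Fin.castAdd q j := by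
      intro hc; exact h (Fin.castAdd_injective q q hc)
    simp [Pi.single_eq_of_ne this, Pi.single_eq_of_ne h]

lemma L1_efib_nat (j : Fin q) : L1 p q (efib (Fin.natAdd q j)) = 0 := by
  rw [L1_apply]
  unfold efib
  refine Prod.ext rfl (Prod.ext ?_ rfl)
  funext j'
  exact Pi.single_eq_of_ne (castAdd_ne_natAdd j' j) _

lemma L2_efib_nat (j : Fin q) : L2 p q (efib (Fin.natAdd q j)) = efib j := by
  rw [L2_apply]
  unfold efib
  refine Prod.ext rfl (Prod.ext ?_ rfl)
  funext j'
  by_cases h : j' = j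
  · subst h; simp
  · have hne : Fin.natAdd q j' ≠ Fin.natAdd q j := by
      intro hc
      have h1 := congrArg Fin.val hc
      simp only [Fin.coe_natAdd] at h1
      exact h (Fin.ext (by omega))
    exact (Pi.single_eq_of_ne hne _).trans (Pi.single_eq_of_ne (M := fun _ : Fin q => ℝ) h (1 : ℝ)).symm

lemma L2_efib_cast (j : Fin q) : L2 p q (efib (Fin.castAdd q j)) = 0 := by
  rw [L2_apply]
  unfold efib
  refine Prod.ext rfl (Prod.ext ?_ rfl)
  funext j'
  exact Pi.single_eq_of_ne (Ne.symm (castAdd_ne_natAdd j j')) _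

lemma map_dirs_L1 {l : Fin p → ℕ} {α : Fin (q+q) → ℕ} {m : ℕ}
    (h0 : ∀ j : Fin q, α (Fin.natAdd q j) = 0) :
    (dirs l α m).map (⇑(L1 p q)) = dirs l (fun j => α (Fin.castAdd q j)) m := by
  unfold dirs
  simp only [List.map_append, List.map_flatten, List.map_ofFn]
  have ebx : (List.map (⇑(L1 p q)) ∘ fun i : Fin p => List.replicate (l i) (ex i))
      = fun i : Fin p => List.replicate (l i) (ex i) := by
    funext i; simp [Function.comp, List.map_replicate, L1_ex]
  have ebf : (List.map (⇑(L1 p q)) ∘ fun j : Fin (q+q) => List.replicate (α j) (efib j))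
      = fun j : Fin (q+q) => List.replicate (α j) (L1 p q (efib j)) := by
    funext j; simp [Function.comp, List.map_replicate]
  have ebt : List.map (⇑(L1 p q)) (List.replicate m et) = List.replicate m (et : Pt p q) := by
    simp [List.map_replicate, L1_et]
  rw [ebx, ebf, ebt]
  congr 2
  rw [List.ofFn_add, List.flatten_append]
  have e2 : (List.ofFn fun j : Fin q =>
      (fun j : Fin (q+q) => List.replicate (α j) (L1 p q (efib j))) (Fin.natAdd q j)).flatten
      = [] := by
    rw [List.flatten_eq_nil_iff]
    intro lst hl
    rcases List.mem_ofFn.mp hl with ⟨j, rfl⟩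
    show List.replicate (α (Fin.natAdd q j)) ((L1 p q) (efib (Fin.natAdd q j))) = []
    rw [h0 j]
    rfl
  rw [e2, List.append_nil]
  exact congrArg List.flatten (congrArg List.ofFn (funext fun j =>
    congrArg (List.replicate (α (Fin.castAdd q j))) (L1_efib_cast j)))

lemma map_dirs_L2 {l : Fin p → ℕ} {α : Fin (q+q) → ℕ} {m : ℕ}
    (h0 : ∀ j : Fin q, α (Fin.castAdd q j) = 0) :
    (dirs l α m).map (⇑(L2 p q)) = dirs l (fun j => α (Fin.natAdd q j)) m := by
  unfold dirs
  simp only [List.map_append, List.map_flatten, List.map_ofFn]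
  have ebx : (List.map (⇑(L2 p q)) ∘ fun i : Fin p => List.replicate (l i) (ex i))
      = fun i : Fin p => List.replicate (l i) (ex i) := by
    funext i; simp [Function.comp, List.map_replicate, L2_ex]
  have ebf : (List.map (⇑(L2 p q)) ∘ fun j : Fin (q+q) => List.replicate (α j) (efib j))
      = fun j : Fin (q+q) => List.replicate (α j) (L2 p q (efib j)) := by
    funext j; simp [Function.comp, List.map_replicate]
  have ebt : List.map (⇑(L2 p q)) (List.replicate m et) = List.replicate m (et : Pt p q) := by
    simp [List.map_replicate, L2_et]
  rw [ebx, ebf, ebt]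
  congr 2
  rw [List.ofFn_add, List.flatten_append]
  have e2 : (List.ofFn fun j : Fin q =>
      (fun j : Fin (q+q) => List.replicate (α j) (L2 p q (efib j))) (Fin.castAdd q j)).flatten
      = [] := by
    rw [List.flatten_eq_nil_iff]
    intro lst hl
    rcases List.mem_ofFn.mp hl with ⟨j, rfl⟩
    show List.replicate (α (Fin.castAdd q j)) ((L2 p q) (efib (Fin.castAdd q j))) = []
    rw [h0 j]
    rfl
  rw [show (List.ofFn fun i : Fin q => List.replicate (α (Fin.castLE (Nat.le_add_right q q) i))
      ((L2 p q) (efib (Fin.castLE (Nat.le_add_right q q) i)))).flatten = [] from e2, List.nil_append]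
  exact congrArg List.flatten (congrArg List.ofFn (funext fun j =>
    congrArg (List.replicate (α (Fin.natAdd q j))) (L2_efib_nat j)))

lemma zero_mem_map_dirs_L1 {l : Fin p → ℕ} {α : Fin (q+q) → ℕ} {m : ℕ} {j0 : Fin q}
    (hj : α (Fin.natAdd q j0) ≠ 0) :
    (0 : Pt p q) ∈ (dirs l α m).map (⇑(L1 p q)) := by
  rw [List.mem_map]
  refine ⟨efib (Fin.natAdd q j0), ?_, L1_efib_nat j0⟩
  unfold dirs
  rw [List.mem_append, List.mem_append]
  right; left
  rw [List.mem_flatten]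
  refine ⟨List.replicate (α (Fin.natAdd q j0)) (efib (Fin.natAdd q j0)), ?_, ?_⟩
  · exact List.mem_ofFn.mpr ⟨Fin.natAdd q j0, rfl⟩
  · exact List.mem_replicate.mpr ⟨hj, rfl⟩

lemma zero_mem_map_dirs_L2 {l : Fin p → ℕ} {α : Fin (q+q) → ℕ} {m : ℕ} {j0 : Fin q}
    (hj : α (Fin.castAdd q j0) ≠ 0) :
    (0 : Pt p q) ∈ (dirs l α m).map (⇑(L2 p q)) := by
  rw [List.mem_map]
  refine ⟨efib (Fin.castAdd q j0), ?_, L2_efib_cast j0⟩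
  unfold dirs
  rw [List.mem_append, List.mem_append]
  right; left
  rw [List.mem_flatten]
  refine ⟨List.replicate (α (Fin.castAdd q j0)) (efib (Fin.castAdd q j0)), ?_, ?_⟩
  · exact List.mem_ofFn.mpr ⟨Fin.castAdd q j0, rfl⟩
  · exact List.mem_replicate.mpr ⟨hj, rfl⟩

end Lmaps

section Bounds

variable {p q : ℕ}

lemma weight_le (ζ : Fin (q + q) → ℝ) (k : ℕ) :
    (1 + ‖ζ‖ ^ 2) ^ k ≤ (1 + ‖(fun j : Fin q => ζ (Fin.castAdd q j))‖ ^ 2) ^ k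
      * (1 + ‖(fun j : Fin q => ζ (Fin.natAdd q j))‖ ^ 2) ^ k := by
  set η : Fin q → ℝ := fun j => ζ (Fin.castAdd q j) with hη
  set ξ : Fin q → ℝ := fun j => ζ (Fin.natAdd q j) with hξ
  rw [← mul_pow]
  apply pow_le_pow_left₀ (by positivity)
  have h1 : ‖ζ‖ ≤ max ‖η‖ ‖ξ‖ := by
    rw [pi_norm_le_iff_of_nonneg (le_max_of_le_left (norm_nonneg η))]
    intro i
    refine Fin.addCases (fun j => ?_) (fun j => ?_) i
    · exact le_max_of_le_left (norm_le_pi_norm η j)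
    · exact le_max_of_le_right (norm_le_pi_norm ξ j)
  have h2 : ‖ζ‖ ^ 2 ≤ ‖η‖ ^ 2 + ‖ξ‖ ^ 2 := by
    rcases max_cases ‖η‖ ‖ξ‖ with ⟨he, _⟩ | ⟨he, _⟩ <;> rw [he] at h1 <;>
      nlinarith [norm_nonneg ζ, norm_nonneg η, norm_nonneg ξ]
  nlinarith [sq_nonneg (‖η‖ * ‖ξ‖), norm_nonneg η, norm_nonneg ξ]

lemma sum_bound {M : ℕ} {s : Set (Pt p M)} {ι : Type*} (ts : List ι) (term : ι → Pt p M → ℂ)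
    (w : Pt p M → ℝ) (hw : ∀ z ∈ s, 0 ≤ w z)
    (hterm : ∀ i ∈ ts, ∃ C > 0, ∀ z ∈ s, w z * ‖term i z‖ ≤ C) :
    ∃ C > 0, ∀ z ∈ s, w z * ‖(ts.map fun i => term i z).sum‖ ≤ C := by
  induction ts with
  | nil => exact ⟨1, one_pos, fun z hz => by simp⟩
  | cons a ts ih =>
    obtain ⟨C1, hC1, h1⟩ := hterm a (by simp)
    obtain ⟨C2, hC2, h2⟩ := ih fun i hi => hterm i (by simp [hi])
    refine ⟨C1 + C2, by positivity, fun z hz => ?_⟩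
    simp only [List.map_cons, List.sum_cons]
    calc w z * ‖term a z + (ts.map fun i => term i z).sum‖
        ≤ w z * (‖term a z‖ + ‖(ts.map fun i => term i z).sum‖) :=
          mul_le_mul_of_nonneg_left (norm_add_le _ _) (hw z hz)
      _ = w z * ‖term a z‖ + w z * ‖(ts.map fun i => term i z).sum‖ := by ring
      _ ≤ C1 + C2 := add_le_add (h1 z hz) (h2 z hz)

variable {U : Set ((Fin p → ℝ) × (Fin q → ℝ))}

lemma mapsTo_L1 :
    MapsTo (⇑(L1 p q)) (Omega {w : (Fin p → ℝ) × (Fin (q + q) → ℝ) |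
        (w.1, fun j => w.2 (Fin.castAdd q j)) ∈ U ∧
        (w.1, fun j => w.2 (Fin.natAdd q j)) ∈ U}) (Omega U) := by
  intro z hz
  exact ⟨hz.1, hz.2.1⟩

lemma mapsTo_L2 :
    MapsTo (⇑(L2 p q)) (Omega {w : (Fin p → ℝ) × (Fin (q + q) → ℝ) |
        (w.1, fun j => w.2 (Fin.castAdd q j)) ∈ U ∧
        (w.1, fun j => w.2 (Fin.natAdd q j)) ∈ U}) (Omega U) := by
  intro z hz
  exact ⟨hz.1, hz.2.2⟩

lemma isOpen_W (hU : IsOpen U) :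
    IsOpen {w : (Fin p → ℝ) × (Fin (q + q) → ℝ) |
        (w.1, fun j => w.2 (Fin.castAdd q j)) ∈ U ∧
        (w.1, fun j => w.2 (Fin.natAdd q j)) ∈ U} := by
  have c1 : Continuous fun w : (Fin p → ℝ) × (Fin (q + q) → ℝ) =>
      ((w.1, fun j => w.2 (Fin.castAdd q j)) : (Fin p → ℝ) × (Fin q → ℝ)) :=
    continuous_fst.prodMk (continuous_pi fun j => (continuous_apply (Fin.castAdd q j)).comp continuous_snd)
  have c2 : Continuous fun w : (Fin p → ℝ) × (Fin (q + q) → ℝ) =>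
      ((w.1, fun j => w.2 (Fin.natAdd q j)) : (Fin p → ℝ) × (Fin q → ℝ)) :=
    continuous_fst.prodMk (continuous_pi fun j => (continuous_apply (Fin.natAdd q j)).comp continuous_snd)
  exact (c1.isOpen_preimage U hU).inter (c2.isOpen_preimage U hU)

end Bounds

end Aux

/-- local form of the Leibniz-formula step in the proof of the main Theorem
of the paper: for `f, g ∈ S_{r,c}(Ω_V^U)`, the function
`h(x,η,ξ,t) = f(x,η,t)·g(x,ξ,t)` belongs to `S_{r,c}(Ω_V^W)`, where
`W = {(x,η,ξ) : (x,η) ∈ U and (x,ξ) ∈ U}` (the fiber `ℝ^q × ℝ^q` being modeled as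
`Fin (q+q) → ℝ`, with first block `η` and second block `ξ`). -/
theorem stmt13 {p q : ℕ} (U : Set ((Fin p → ℝ) × (Fin q → ℝ))) (hU : IsOpen U)
    (f g : Pt p q → ℂ) (hf : MemSrc U f) (hg : MemSrc U g) :
    MemSrc
      {w : (Fin p → ℝ) × (Fin (q + q) → ℝ) |
        (w.1, fun j => w.2 (Fin.castAdd q j)) ∈ U ∧
        (w.1, fun j => w.2 (Fin.natAdd q j)) ∈ U}
      (fun z : Pt p (q + q) =>
        f (z.1, fun j => z.2.1 (Fin.castAdd q j), z.2.2) *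
        g (z.1, fun j => z.2.1 (Fin.natAdd q j), z.2.2)) := by
  classical
  obtain ⟨hfs, hfsupp, hfdec⟩ := hf
  obtain ⟨hgs, hgsupp, hgdec⟩ := hg
  have hWopen := Aux.isOpen_W (U := U) hU
  have hs : UniqueDiffOn ℝ (Omega {w : (Fin p → ℝ) × (Fin (q + q) → ℝ) |
      (w.1, fun j => w.2 (Fin.castAdd q j)) ∈ U ∧
      (w.1, fun j => w.2 (Fin.natAdd q j)) ∈ U}) := Aux.uniqueDiffOn_Omega hWopen
  have hu : UniqueDiffOn ℝ (Omega U) := Aux.uniqueDiffOn_Omega hU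
  have hm1 := Aux.mapsTo_L1 (p := p) (q := q) (U := U)
  have hm2 := Aux.mapsTo_L2 (p := p) (q := q) (U := U)
  refine ⟨?_, ?_, ?_⟩
  · -- smoothness
    have c1 : ContDiffOn ℝ (⊤ : ℕ∞) (f ∘ ⇑(Aux.L1 p q)) _ :=
      hfs.comp (Aux.L1 p q).contDiff.contDiffOn hm1
    have c2 : ContDiffOn ℝ (⊤ : ℕ∞) (g ∘ ⇑(Aux.L2 p q)) _ :=
      hgs.comp (Aux.L2 p q).contDiff.contDiffOn hm2
    exact c1.mul c2
  · -- conic compact support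
    obtain ⟨Kf, ⟨hKfc, hKfsub, hKfcone⟩, hKfz⟩ := hfsupp
    obtain ⟨Kg, ⟨hKgc, hKgsub, hKgcone⟩, hKgz⟩ := hgsupp
    refine ⟨(⇑(Aux.L1 p q)) ⁻¹' Kf ∩ (⇑(Aux.L2 p q)) ⁻¹' Kg, ⟨?_, ?_, ?_⟩, ?_⟩
    · rw [Metric.isCompact_iff_isClosed_bounded]
      constructor
      · exact (hKfc.isClosed.preimage (Aux.L1 p q).continuous).inter
          (hKgc.isClosed.preimage (Aux.L2 p q).continuous)
      · obtain ⟨Rf, hRf⟩ := isBounded_iff_forall_norm_le.mp hKfc.isBounded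
        obtain ⟨Rg, hRg⟩ := isBounded_iff_forall_norm_le.mp hKgc.isBounded
        rw [isBounded_iff_forall_norm_le]
        refine ⟨max (max Rf Rg) 0, fun z hz => ?_⟩
        have h1 : ‖Aux.L1 p q z‖ ≤ Rf := hRf _ hz.1
        have h2 : ‖Aux.L2 p q z‖ ≤ Rg := hRg _ hz.2
        have hRfle : Rf ≤ max (max Rf Rg) 0 := le_max_of_le_left (le_max_left _ _)
        have hRgle : Rg ≤ max (max Rf Rg) 0 := le_max_of_le_left (le_max_right _ _)
        rw [Prod.norm_def]
        apply max_le
        · calc ‖z.1‖ = ‖(Aux.L1 p q z).1‖ := rfl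
            _ ≤ ‖Aux.L1 p q z‖ := norm_fst_le _
            _ ≤ _ := le_trans h1 hRfle
        · rw [Prod.norm_def]
          apply max_le
          · rw [pi_norm_le_iff_of_nonneg (le_max_right _ 0)]
            intro i
            refine Fin.addCases (fun j => ?_) (fun j => ?_) i
            · calc ‖z.2.1 (Fin.castAdd q j)‖ = ‖(Aux.L1 p q z).2.1 j‖ := rfl
                _ ≤ ‖(Aux.L1 p q z).2.1‖ := norm_le_pi_norm _ j
                _ ≤ ‖(Aux.L1 p q z).2‖ := norm_fst_le _
                _ ≤ ‖Aux.L1 p q z‖ := norm_snd_le _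
                _ ≤ _ := le_trans h1 hRfle
            · calc ‖z.2.1 (Fin.natAdd q j)‖ = ‖(Aux.L2 p q z).2.1 j‖ := rfl
                _ ≤ ‖(Aux.L2 p q z).2.1‖ := norm_le_pi_norm _ j
                _ ≤ ‖(Aux.L2 p q z).2‖ := norm_fst_le _
                _ ≤ ‖Aux.L2 p q z‖ := norm_snd_le _
                _ ≤ _ := le_trans h2 hRgle
          · calc ‖z.2.2‖ = ‖(Aux.L1 p q z).2.2‖ := rfl
              _ ≤ ‖(Aux.L1 p q z).2‖ := norm_snd_le _
              _ ≤ ‖Aux.L1 p q z‖ := norm_snd_le _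
              _ ≤ _ := le_trans h1 hRfle
    · intro z hz
      have h1 := hKfsub _ hz.1
      have h2 := hKgsub _ hz.2
      exact ⟨⟨h1.1, h2.1⟩, h1.2⟩
    · intro z hz h0
      funext i
      refine Fin.addCases (fun j => ?_) (fun j => ?_) i
      · exact congrFun (hKfcone _ hz.1 h0) j
      · exact congrFun (hKgcone _ hz.2 h0) j
    · intro z hz ht hnK
      by_cases hc : Aux.L1 p q (z.1, z.2.2 • z.2.1, z.2.2) ∈ Kf
      · have hc2 : Aux.L2 p q (z.1, z.2.2 • z.2.1, z.2.2) ∉ Kg := fun hg' => hnK ⟨hc, hg'⟩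
        have hg0 : g (Aux.L2 p q z) = 0 := hKgz _ (hm2 hz) ht hc2
        exact mul_eq_zero_of_right _ hg0
      · have hf0 : f (Aux.L1 p q z) = 0 := hKfz _ (hm1 hz) ht hc
        exact mul_eq_zero_of_left hf0 _
  · -- rapid decay
    intro k m l α
    have master := Aux.master hs hu hfs hgs hm1 hm2 (Aux.dirs l α m)
    have hterm : ∀ ab ∈ Aux.splittings (Aux.dirs l α m), ∃ C > 0,
        ∀ z ∈ Omega {w : (Fin p → ℝ) × (Fin (q + q) → ℝ) |
          (w.1, fun j => w.2 (Fin.castAdd q j)) ∈ U ∧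
          (w.1, fun j => w.2 (Fin.natAdd q j)) ∈ U},
        (fun z : Pt p (q + q) => (1 + ‖z.2.1‖ ^ 2) ^ k) z *
          ‖Aux.chainD (Omega U) (ab.1.map ⇑(Aux.L1 p q)) f (Aux.L1 p q z) *
            Aux.chainD (Omega U) (ab.2.map ⇑(Aux.L2 p q)) g (Aux.L2 p q z)‖ ≤ C := by
      intro ab hab
      obtain ⟨ha, hb⟩ := Aux.mem_splittings_sublist hab
      obtain ⟨l1, α1, m1, -, -, -, h1eq⟩ := Aux.sublist_dirs ha
      obtain ⟨l2, α2, m2, -, -, -, h2eq⟩ := Aux.sublist_dirs hb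
      by_cases hA0 : ∀ j : Fin q, α1 (Fin.natAdd q j) = 0
      · by_cases hB0 : ∀ j : Fin q, α2 (Fin.castAdd q j) = 0
        · obtain ⟨Cf, hCf0, hCf⟩ := hfdec k m1 l1 (fun j => α1 (Fin.castAdd q j))
          obtain ⟨Cg, hCg0, hCg⟩ := hgdec k m2 l2 (fun j => α2 (Fin.natAdd q j))
          refine ⟨Cf * Cg, mul_pos hCf0 hCg0, fun z hz => ?_⟩
          have e1 : Aux.chainD (Omega U) (ab.1.map ⇑(Aux.L1 p q)) f
              = mixedD (Omega U) l1 (fun j => α1 (Fin.castAdd q j)) m1 f := by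
            rw [h1eq, Aux.map_dirs_L1 hA0, ← Aux.mixedD_eq_chainD]
          have e2 : Aux.chainD (Omega U) (ab.2.map ⇑(Aux.L2 p q)) g
              = mixedD (Omega U) l2 (fun j => α2 (Fin.natAdd q j)) m2 g := by
            rw [h2eq, Aux.map_dirs_L2 hB0, ← Aux.mixedD_eq_chainD]
          rw [e1, e2, norm_mul]
          have hb1 := hCf _ (hm1 hz)
          have hb2 := hCg _ (hm2 hz)
          have hw : (1 + ‖z.2.1‖ ^ 2) ^ k ≤ (1 + ‖(Aux.L1 p q z).2.1‖ ^ 2) ^ k *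
              (1 + ‖(Aux.L2 p q z).2.1‖ ^ 2) ^ k := Aux.weight_le z.2.1 k
          set a := (1 + ‖(Aux.L1 p q z).2.1‖ ^ 2) ^ k with hadef
          set b := (1 + ‖(Aux.L2 p q z).2.1‖ ^ 2) ^ k with hbdef
          set F := ‖mixedD (Omega U) l1 (fun j => α1 (Fin.castAdd q j)) m1 f (Aux.L1 p q z)‖
          set G := ‖mixedD (Omega U) l2 (fun j => α2 (Fin.natAdd q j)) m2 g (Aux.L2 p q z)‖
          have hF : (0:ℝ) ≤ F := norm_nonneg _
          have hG : (0:ℝ) ≤ G := norm_nonneg _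
          calc (fun z : Pt p (q + q) => (1 + ‖z.2.1‖ ^ 2) ^ k) z * (F * G)
              ≤ (a * b) * (F * G) := by
                apply mul_le_mul_of_nonneg_right hw (by positivity)
            _ = (a * F) * (b * G) := by ring
            _ ≤ Cf * Cg := mul_le_mul hb1 hb2 (by positivity) hCf0.le
        · push_neg at hB0
          obtain ⟨j0, hj0⟩ := hB0
          refine ⟨1, one_pos, fun z hz => ?_⟩
          have hz2 : Aux.chainD (Omega U) (ab.2.map ⇑(Aux.L2 p q)) g (Aux.L2 p q z) = 0 := by
            rw [h2eq]
            exact Aux.chainD_zero hu (Aux.zero_mem_map_dirs_L2 hj0) _ (hm2 hz)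
          rw [hz2, mul_zero, norm_zero, mul_zero]
          exact zero_le_one
      · push_neg at hA0
        obtain ⟨j0, hj0⟩ := hA0
        refine ⟨1, one_pos, fun z hz => ?_⟩
        have hz1 : Aux.chainD (Omega U) (ab.1.map ⇑(Aux.L1 p q)) f (Aux.L1 p q z) = 0 := by
          rw [h1eq]
          exact Aux.chainD_zero hu (Aux.zero_mem_map_dirs_L1 hj0) _ (hm1 hz)
        rw [hz1, zero_mul, norm_zero, mul_zero]
        exact zero_le_one
    obtain ⟨C, hC0, hC⟩ := Aux.sum_bound (Aux.splittings (Aux.dirs l α m))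
      (fun ab z => Aux.chainD (Omega U) (ab.1.map ⇑(Aux.L1 p q)) f (Aux.L1 p q z) *
        Aux.chainD (Omega U) (ab.2.map ⇑(Aux.L2 p q)) g (Aux.L2 p q z))
      (fun z => (1 + ‖z.2.1‖ ^ 2) ^ k) (fun z hz => by positivity) hterm
    refine ⟨C, hC0, fun z hz => ?_⟩
    have e := hC z hz
    rw [Aux.mixedD_eq_chainD]
    rw [show Aux.chainD
        (Omega {w : (Fin p → ℝ) × (Fin (q + q) → ℝ) |
          (w.1, fun j => w.2 (Fin.castAdd q j)) ∈ U ∧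
          (w.1, fun j => w.2 (Fin.natAdd q j)) ∈ U}) (Aux.dirs l α m)
        (fun z : Pt p (q + q) =>
          f (z.1, fun j => z.2.1 (Fin.castAdd q j), z.2.2) *
          g (z.1, fun j => z.2.1 (Fin.natAdd q j), z.2.2)) z = _ from master z hz]
    exact e
end
end
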